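/- arXiv:2206.04589 — 6 statements merged into one kernel-verified Lean document; each statement's English description precedes it below -/
import Mathlib

section
/- Let k, m, M be positive integers with k ≤ m ≤ M, let ν > 0, and let A be a probability distribution on {0,1,...,m} such that |E_{X∼A}[K_t(X;m)]| ≤ ν for all 1 ≤ t ≤ k. Then for all subsets S, S' ⊆ {1,...,M} with |S| = |S'| = m, one has |χ_{U_M}(P_S^A, P_{S'}^A)| ≤ (|S∩S'|/m)^{k+1} · χ²(A, Bin(m,1/2)) + k·ν². -/
open Finset

/-- The pmf of the binomial distribution `Bin(m, p)` at `x`. -/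
noncomputable def binPMF (m : ℕ) (p : ℝ) (x : ℕ) : ℝ :=
  (m.choose x : ℝ) * p ^ x * (1 - p) ^ (m - x)

/-- The Kravchuk polynomial value `K_t(x; m)`. -/
noncomputable def kravchuk (m t x : ℕ) : ℝ :=
  ∑ j ∈ Finset.range (t + 1),
    (-1 : ℝ) ^ j * (x.choose j : ℝ) * ((m - x).choose (t - j) : ℝ)

/-- `Σ_{i ∈ S} x_i` for `x ∈ {0,1}^M`. -/
def bitSum {M : ℕ} (S : Finset (Fin M)) (x : Fin M → Bool) : ℕ :=
  (S.filter fun i => x i = true).card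

/-- The hidden junta distribution `P_S^A` on `{0,1}^M`. -/
noncomputable def juntaPMF (M m : ℕ) (A : ℕ → ℝ) (S : Finset (Fin M))
    (x : Fin M → Bool) : ℝ :=
  (2 : ℝ) ^ m / (2 : ℝ) ^ M * A (bitSum S x) / (m.choose (bitSum S x) : ℝ)

/-- The uniform distribution `U_M` on `{0,1}^M`. -/
noncomputable def uniformPMF (M : ℕ) (_x : Fin M → Bool) : ℝ := 1 / (2 : ℝ) ^ M

/-- Pairwise correlation `χ_D(P, Q)`. -/
noncomputable def chiCorr {α : Type*} [Fintype α] (P Q D : α → ℝ) : ℝ :=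
  (∑ x, P x * Q x / D x) - 1

/-- Chi-squared divergence `χ²(P, Q)` for distributions on `{0,…,m}`. -/
noncomputable def chiSqNat (m : ℕ) (P Q : ℕ → ℝ) : ℝ :=
  (∑ x ∈ Finset.range (m + 1), (P x) ^ 2 / Q x) - 1

namespace CorrAux

noncomputable def sgn (b : Bool) : ℝ := if b then -1 else 1

noncomputable def chi {M : ℕ} (T : Finset (Fin M)) (x : Fin M → Bool) : ℝ :=
  ∏ i ∈ T, sgn (x i)

lemma sgn_mul_sgn (b c : Bool) : sgn b * sgn c = if b = c then 1 else -1 := by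
  cases b <;> cases c <;> simp [sgn]

lemma chi_eq_pow {M : ℕ} (T : Finset (Fin M)) (x : Fin M → Bool) :
    chi T x = (-1 : ℝ) ^ (T.filter fun i => x i = true).card := by
  rw [chi, ← Finset.prod_filter_mul_prod_filter_not T (fun i => x i = true)]
  have h1 : ∀ i ∈ T.filter (fun i => x i = true), sgn (x i) = -1 := by
    intro i hi; simp only [mem_filter] at hi; simp [sgn, hi.2]
  have h2 : ∀ i ∈ T.filter (fun i => ¬ x i = true), sgn (x i) = 1 := by
    intro i hi; simp only [mem_filter] at hi
    simp [sgn, Bool.not_eq_true] at hi ⊢; simp [hi.2]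
  rw [Finset.prod_congr rfl h1, Finset.prod_congr rfl h2, Finset.prod_const,
    Finset.prod_const, one_pow, mul_one]

def toSet {M : ℕ} (x : Fin M → Bool) : Finset (Fin M) :=
  Finset.univ.filter (fun i => x i = true)

lemma toSet_bijective {M : ℕ} : Function.Bijective (toSet (M := M)) := by
  rw [Fintype.bijective_iff_injective_and_card]
  constructor
  · intro x y hxy
    funext i
    have := Finset.ext_iff.mp hxy i
    simp only [toSet, mem_filter, mem_univ, true_and] at this
    cases hx : x i <;> cases hy : y i <;> simp [hx, hy] at this ⊢
  · simp [Fintype.card_finset]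

lemma sum_toSet {M : ℕ} (F : Finset (Fin M) → ℝ) :
    ∑ x : Fin M → Bool, F (toSet x) = ∑ X : Finset (Fin M), F X :=
  Function.Bijective.sum_comp toSet_bijective F

lemma bitSum_eq {M : ℕ} (S : Finset (Fin M)) (x : Fin M → Bool) :
    bitSum S x = (S ∩ toSet x).card := by
  unfold bitSum
  congr 1
  ext i; simp [bitSum, toSet, mem_filter, and_comm]

lemma chi_eq_toSet {M : ℕ} (T : Finset (Fin M)) (x : Fin M → Bool) :
    chi T x = (-1 : ℝ) ^ (T ∩ toSet x).card := by
  rw [chi_eq_pow]; congr 2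
  ext i; simp [toSet, mem_filter, and_comm]

end CorrAux
namespace CorrAux

variable {α : Type*} [DecidableEq α]

/-- fiber count: # of `Y ∈ s.powersetCard w` with `Y ∩ T = J`. -/
lemma fiber_card (s T J : Finset α) (hT : T ⊆ s) (hJ : J ⊆ T) (w : ℕ) :
    ((s.powersetCard w).filter (fun Y => Y ∩ T = J)).card =
      if J.card ≤ w then (s \ T).card.choose (w - J.card) else 0 := by
  split_ifs with hjw
  · rw [← Finset.card_powersetCard (w - J.card) (s \ T)]
    apply Finset.card_bij' (fun Y _ => Y \ T) (fun Z _ => Z ∪ J)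
    · intro Y hY
      simp only [mem_filter, Finset.mem_powersetCard] at hY
      obtain ⟨⟨hYs, hYw⟩, hYT⟩ := hY
      rw [Finset.mem_powersetCard]
      constructor
      · exact Finset.sdiff_subset_sdiff hYs (le_refl _)
      · have := Finset.card_sdiff_add_card_inter Y T
        rw [hYT, hYw] at this
        omega
    · intro Z hZ
      rw [Finset.mem_powersetCard] at hZ
      obtain ⟨hZs, hZw⟩ := hZ
      have hdisj : Disjoint Z T := Finset.disjoint_of_subset_left hZs sdiff_disjoint
      simp only [mem_filter, Finset.mem_powersetCard]
      refine ⟨⟨?_, ?_⟩, ?_⟩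
      · exact Finset.union_subset (hZs.trans (Finset.sdiff_subset)) (hJ.trans hT)
      · rw [Finset.card_union_of_disjoint (Finset.disjoint_of_subset_right hJ hdisj), hZw]
        omega
      · rw [Finset.union_inter_distrib_right, Finset.inter_eq_left.mpr hJ,
          Finset.disjoint_iff_inter_eq_empty.mp hdisj, Finset.empty_union]
    · intro Y hY
      simp only [mem_filter, Finset.mem_powersetCard] at hY
      rw [← hY.2]
      exact Finset.sdiff_union_inter Y T
    · intro Z hZ
      rw [Finset.mem_powersetCard] at hZ
      have hdisj : Disjoint Z T := Finset.disjoint_of_subset_left hZ.1 sdiff_disjoint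
      rw [Finset.union_sdiff_distrib, Finset.sdiff_eq_self_of_disjoint hdisj,
        Finset.sdiff_eq_empty_iff_subset.mpr hJ, Finset.union_empty]
  · rw [Finset.card_eq_zero, Finset.filter_eq_empty_iff]
    intro Y hY
    rw [Finset.mem_powersetCard] at hY
    intro hYT
    apply hjw
    rw [← hYT, ← hY.2]
    exact Finset.card_le_card (Finset.inter_subset_left)

end CorrAux

namespace CorrAux
variable {α : Type*} [DecidableEq α]

/-- key count: `∑_{Y ⊆ s, |Y| = w} (-1)^{|Y ∩ T|} = K_w(|T|; |s|)`. -/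
lemma sum_powersetCard_sign (s T : Finset α) (hT : T ⊆ s) (w : ℕ) :
    ∑ Y ∈ s.powersetCard w, ((-1 : ℝ)) ^ (Y ∩ T).card =
      kravchuk s.card w T.card := by
  set m := s.card with hm
  set t := T.card with ht
  have hfib : ∀ Y ∈ s.powersetCard w, Y ∩ T ∈ T.powerset := by
    intro Y hY; exact Finset.mem_powerset.mpr Finset.inter_subset_right
  have key : ∑ Y ∈ s.powersetCard w, ((-1 : ℝ)) ^ (Y ∩ T).card
      = ∑ J ∈ T.powerset, ((-1:ℝ) ^ J.card *
          (if J.card ≤ w then ((m - t).choose (w - J.card) : ℝ) else 0)) := by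
    rw [← Finset.sum_fiberwise_of_maps_to hfib (fun Y => ((-1:ℝ)) ^ (Y ∩ T).card)]
    apply Finset.sum_congr rfl
    intro J hJ
    rw [Finset.mem_powerset] at hJ
    have hc : ∀ Y ∈ (s.powersetCard w).filter (fun Y => Y ∩ T = J),
        ((-1:ℝ)) ^ (Y ∩ T).card = ((-1:ℝ)) ^ J.card := by
      intro Y hY
      rw [mem_filter] at hY
      rw [hY.2]
    rw [Finset.sum_congr rfl hc, Finset.sum_const, nsmul_eq_mul,
      fiber_card s T J hT hJ w, ← Finset.card_sdiff_of_subset hT]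
    split_ifs with h
    · push_cast; ring
    · push_cast; ring
  rw [key, Finset.sum_powerset]
  have step2 : ∀ j ∈ Finset.range (t + 1),
      (∑ J ∈ Finset.powersetCard j T, ((-1:ℝ) ^ J.card *
          (if J.card ≤ w then ((m - t).choose (w - J.card) : ℝ) else 0)))
        = (t.choose j : ℝ) * ((-1:ℝ) ^ j *
          (if j ≤ w then ((m - t).choose (w - j) : ℝ) else 0)) := by
    intro j hj
    have hc : ∀ J ∈ Finset.powersetCard j T,
        ((-1:ℝ) ^ J.card * (if J.card ≤ w then ((m - t).choose (w - J.card) : ℝ) else 0))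
          = ((-1:ℝ) ^ j * (if j ≤ w then ((m - t).choose (w - j) : ℝ) else 0)) := by
      intro J hJ
      rw [Finset.mem_powersetCard] at hJ
      rw [hJ.2]
    rw [Finset.sum_congr rfl hc, Finset.sum_const, nsmul_eq_mul,
      Finset.card_powersetCard, ← ht]
  rw [Finset.sum_congr rfl step2, kravchuk]
  have ext1 : ∑ j ∈ Finset.range (t + 1), ((t.choose j : ℝ) * ((-1:ℝ) ^ j *
          (if j ≤ w then ((m - t).choose (w - j) : ℝ) else 0)))
      = ∑ j ∈ Finset.range (t + w + 1), ((t.choose j : ℝ) * ((-1:ℝ) ^ j *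
          (if j ≤ w then ((m - t).choose (w - j) : ℝ) else 0))) := by
    apply Finset.sum_subset (Finset.range_subset_range.mpr (by omega))
    intro j hj hj'
    rw [Finset.mem_range] at hj hj'
    rw [Nat.choose_eq_zero_of_lt (by omega : t < j)]
    push_cast; ring
  have ext2 : ∑ j ∈ Finset.range (w + 1), ((-1:ℝ) ^ j * (t.choose j : ℝ) * (((m - t)).choose (w - j) : ℝ))
      = ∑ j ∈ Finset.range (t + w + 1), ((t.choose j : ℝ) * ((-1:ℝ) ^ j *
          (if j ≤ w then ((m - t).choose (w - j) : ℝ) else 0))) := by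
    have hc : ∀ j ∈ Finset.range (w + 1),
        ((-1:ℝ) ^ j * (t.choose j : ℝ) * (((m - t)).choose (w - j) : ℝ))
          = ((t.choose j : ℝ) * ((-1:ℝ) ^ j *
            (if j ≤ w then ((m - t).choose (w - j) : ℝ) else 0))) := by
      intro j hj
      rw [Finset.mem_range] at hj
      rw [if_pos (by omega : j ≤ w)]
      ring
    rw [Finset.sum_congr rfl hc]
    apply Finset.sum_subset (Finset.range_subset_range.mpr (by omega))
    intro j hj hj'
    rw [Finset.mem_range] at hj hj'
    rw [if_neg (by omega : ¬ j ≤ w)]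
    ring
  rw [ext1, ← ext2]

end CorrAux

namespace CorrAux
variable {α : Type*} [DecidableEq α] [Fintype α]

lemma fiber_card_univ (s Y : Finset α) (hY : Y ⊆ s) :
    ((Finset.univ : Finset (Finset α)).filter (fun X => X ∩ s = Y)).card
      = 2 ^ (Fintype.card α - s.card) := by
  have hcard : ((Finset.univ : Finset α) \ s).card = Fintype.card α - s.card := by
    rw [Finset.card_sdiff_of_subset (Finset.subset_univ s), Finset.card_univ]
  rw [← hcard, ← Finset.card_powerset]
  apply Finset.card_bij' (fun X _ => X \ s) (fun Z _ => Z ∪ Y)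
  · intro X hX
    rw [mem_filter] at hX
    exact Finset.mem_powerset.mpr (Finset.sdiff_subset_sdiff (Finset.subset_univ X) le_rfl)
  · intro Z hZ
    rw [Finset.mem_powerset] at hZ
    have hdisj : Disjoint Z s := Finset.disjoint_of_subset_left hZ sdiff_disjoint
    rw [mem_filter]
    refine ⟨Finset.mem_univ _, ?_⟩
    rw [Finset.union_inter_distrib_right, Finset.inter_eq_left.mpr hY,
      Finset.disjoint_iff_inter_eq_empty.mp hdisj, Finset.empty_union]
  · intro X hX
    rw [mem_filter] at hX
    rw [← hX.2]
    exact Finset.sdiff_union_inter X s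
  · intro Z hZ
    rw [Finset.mem_powerset] at hZ
    have hdisj : Disjoint Z s := Finset.disjoint_of_subset_left hZ sdiff_disjoint
    rw [Finset.union_sdiff_distrib, Finset.sdiff_eq_self_of_disjoint hdisj,
      Finset.sdiff_eq_empty_iff_subset.mpr hY, Finset.union_empty]

lemma sum_inter_fiber (s : Finset α) (h : Finset α → ℝ) :
    ∑ X : Finset α, h (X ∩ s)
      = 2 ^ (Fintype.card α - s.card) * ∑ Y ∈ s.powerset, h Y := by
  have hfib : ∀ X ∈ (Finset.univ : Finset (Finset α)), X ∩ s ∈ s.powerset :=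
    fun X _ => Finset.mem_powerset.mpr Finset.inter_subset_right
  rw [← Finset.sum_fiberwise_of_maps_to hfib (fun X => h (X ∩ s)), Finset.mul_sum]
  apply Finset.sum_congr rfl
  intro Y hY
  rw [Finset.mem_powerset] at hY
  have hc : ∀ X ∈ (Finset.univ : Finset (Finset α)).filter (fun X => X ∩ s = Y),
      h (X ∩ s) = h Y := by
    intro X hX; rw [mem_filter] at hX; rw [hX.2]
  rw [Finset.sum_congr rfl hc, Finset.sum_const, nsmul_eq_mul,
    fiber_card_univ s Y hY]
  push_cast
  ring

/-- Master counting lemma. -/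
lemma master (s T : Finset α) (hT : T ⊆ s) (g : ℕ → ℝ) :
    ∑ X : Finset α, g ((s ∩ X).card) * ((-1:ℝ)) ^ ((T ∩ X).card)
      = 2 ^ (Fintype.card α - s.card) *
        ∑ w ∈ Finset.range (s.card + 1), g w * kravchuk s.card w T.card := by
  have hrw : ∀ X : Finset α,
      g ((s ∩ X).card) * ((-1:ℝ)) ^ ((T ∩ X).card)
        = (fun Y => g Y.card * ((-1:ℝ)) ^ ((Y ∩ T).card)) (X ∩ s) := by
    intro X
    simp only []
    rw [Finset.inter_comm X s]
    congr 2
    rw [Finset.inter_comm (s ∩ X) T, ← Finset.inter_assoc,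
      Finset.inter_eq_left.mpr hT]
  rw [Finset.sum_congr rfl (fun X _ => hrw X),
    sum_inter_fiber s (fun Y => g Y.card * ((-1:ℝ)) ^ ((Y ∩ T).card)),
    Finset.sum_powerset]
  congr 1
  apply Finset.sum_congr rfl
  intro w hw
  rw [← sum_powersetCard_sign s T hT w, Finset.mul_sum]
  apply Finset.sum_congr rfl
  intro Y hY
  rw [Finset.mem_powersetCard] at hY
  rw [hY.2]

end CorrAux

namespace CorrAux

lemma reciprocity (m t w : ℕ) (ht : t ≤ m) (hw : w ≤ m) :
    (m.choose t : ℝ) * kravchuk m w t = (m.choose w : ℝ) * kravchuk m t w := by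
  have hcard : (Finset.univ : Finset (Fin m)).card = m := by
    rw [Finset.card_univ, Fintype.card_fin]
  have key : ∑ T ∈ (Finset.univ : Finset (Fin m)).powersetCard t,
      ∑ Y ∈ (Finset.univ : Finset (Fin m)).powersetCard w, ((-1:ℝ)) ^ (Y ∩ T).card
      = (m.choose t : ℝ) * kravchuk m w t := by
    have hc : ∀ T ∈ (Finset.univ : Finset (Fin m)).powersetCard t,
        (∑ Y ∈ (Finset.univ : Finset (Fin m)).powersetCard w, ((-1:ℝ)) ^ (Y ∩ T).card)
          = kravchuk m w t := by
      intro T hT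
      rw [Finset.mem_powersetCard] at hT
      rw [sum_powersetCard_sign Finset.univ T (Finset.subset_univ T) w, hcard, hT.2]
    rw [Finset.sum_congr rfl hc, Finset.sum_const, nsmul_eq_mul,
      Finset.card_powersetCard, hcard]
  have key2 : ∑ T ∈ (Finset.univ : Finset (Fin m)).powersetCard t,
      ∑ Y ∈ (Finset.univ : Finset (Fin m)).powersetCard w, ((-1:ℝ)) ^ (Y ∩ T).card
      = (m.choose w : ℝ) * kravchuk m t w := by
    rw [Finset.sum_comm]
    have hc : ∀ Y ∈ (Finset.univ : Finset (Fin m)).powersetCard w,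
        (∑ T ∈ (Finset.univ : Finset (Fin m)).powersetCard t, ((-1:ℝ)) ^ (Y ∩ T).card)
          = kravchuk m t w := by
      intro Y hY
      rw [Finset.mem_powersetCard] at hY
      have hc2 : ∀ T ∈ (Finset.univ : Finset (Fin m)).powersetCard t,
          ((-1:ℝ)) ^ (Y ∩ T).card = ((-1:ℝ)) ^ (T ∩ Y).card := by
        intro T _; rw [Finset.inter_comm]
      rw [Finset.sum_congr rfl hc2,
        sum_powersetCard_sign Finset.univ Y (Finset.subset_univ Y) t, hcard, hY.2]
    rw [Finset.sum_congr rfl hc, Finset.sum_const, nsmul_eq_mul,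
      Finset.card_powersetCard, hcard]
  rw [← key, key2]

lemma kravchuk_zero (m w : ℕ) : kravchuk m w 0 = (m.choose w : ℝ) := by
  rw [kravchuk]
  rw [Finset.sum_eq_single 0]
  · simp
  · intro j hj hj0
    rw [Nat.choose_eq_zero_of_lt (by omega : 0 < j)]
    push_cast; ring
  · intro h
    simp at h

lemma kravchuk_zero' (m x : ℕ) : kravchuk m 0 x = 1 := by
  simp [kravchuk]

end CorrAux

namespace CorrAux

lemma sum_chi_mul {M : ℕ} (x y : Fin M → Bool) :
    ∑ T : Finset (Fin M), chi T x * chi T y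
      = if x = y then (2:ℝ) ^ M else 0 := by
  have h1 : ∀ T : Finset (Fin M), chi T x * chi T y
      = ∏ i ∈ T, (sgn (x i) * sgn (y i)) := by
    intro T; rw [chi, chi, Finset.prod_mul_distrib]
  have h2 : ∑ T : Finset (Fin M), chi T x * chi T y
      = ∑ T ∈ (Finset.univ : Finset (Fin M)).powerset,
          (∏ i ∈ T, (sgn (x i) * sgn (y i))) * ∏ i ∈ (Finset.univ : Finset (Fin M)) \ T, 1 := by
    rw [Finset.powerset_univ]
    apply Finset.sum_congr rfl
    intro T _
    rw [h1, Finset.prod_const_one, mul_one]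
  rw [h2, ← Finset.prod_add]
  have h3 : ∀ i, sgn (x i) * sgn (y i) + 1 = if x i = y i then 2 else 0 := by
    intro i
    rw [sgn_mul_sgn]
    split_ifs <;> norm_num
  rw [Finset.prod_congr rfl (fun i _ => h3 i)]
  split_ifs with hxy
  · subst hxy
    simp
  · obtain ⟨i, hi⟩ : ∃ i, x i ≠ y i := by
      by_contra h
      push_neg at h
      exact hxy (funext h)
    exact Finset.prod_eq_zero (Finset.mem_univ i) (by simp [hi])

lemma parseval {M : ℕ} (P Q : (Fin M → Bool) → ℝ) :
    ∑ T : Finset (Fin M), (∑ x, P x * chi T x) * (∑ y, Q y * chi T y)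
      = (2:ℝ) ^ M * ∑ x, P x * Q x := by
  have h1 : ∀ T : Finset (Fin M), (∑ x, P x * chi T x) * (∑ y, Q y * chi T y)
      = ∑ x, ∑ y, P x * Q y * (chi T x * chi T y) := by
    intro T
    rw [Finset.sum_mul_sum]
    apply Finset.sum_congr rfl; intro x _
    apply Finset.sum_congr rfl; intro y _
    ring
  rw [Finset.sum_congr rfl (fun T _ => h1 T), Finset.sum_comm]
  have h2 : ∀ x : Fin M → Bool,
      (∑ T : Finset (Fin M), ∑ y, P x * Q y * (chi T x * chi T y))
        = (2:ℝ) ^ M * (P x * Q x) := by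
    intro x
    rw [Finset.sum_comm]
    have h3 : ∀ y, (∑ T : Finset (Fin M), P x * Q y * (chi T x * chi T y))
        = if x = y then P x * Q y * (2:ℝ) ^ M else 0 := by
      intro y
      rw [← Finset.mul_sum, sum_chi_mul]
      split_ifs <;> ring
    rw [Finset.sum_congr rfl (fun y _ => h3 y), Finset.sum_ite_eq]
    simp
    ring
  rw [Finset.sum_congr rfl (fun x _ => h2 x), ← Finset.mul_sum]

end CorrAux

namespace CorrAux

lemma sgn_not (b : Bool) : sgn (!b) = - sgn b := by cases b <;> simp [sgn]

lemma fhat_not_subset {M m : ℕ} (A : ℕ → ℝ) (S T : Finset (Fin M)) (hT : ¬ T ⊆ S) :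
    ∑ x, juntaPMF M m A S x * chi T x = 0 := by
  obtain ⟨i, hiT, hiS⟩ := Finset.not_subset.mp hT
  set f : (Fin M → Bool) → ℝ := fun x => juntaPMF M m A S x * chi T x with hf
  have hinv : Function.Involutive (fun x : Fin M → Bool => Function.update x i (!(x i))) := by
    intro x
    funext j
    by_cases hj : j = i
    · subst hj; simp [Function.update_self]
    · simp [Function.update_of_ne hj]
  have hneg : ∀ x, f ((fun x : Fin M → Bool => Function.update x i (!(x i))) x) = - f x := by
    intro x
    set x' := Function.update x i (!(x i)) with hx'
    have hbit : bitSum S x' = bitSum S x := by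
      unfold bitSum
      congr 1
      apply Finset.filter_congr
      intro j hj
      have : j ≠ i := fun h => hiS (h ▸ hj)
      rw [hx', Function.update_of_ne this]
    have hchi : chi T x' = - chi T x := by
      rw [chi, chi, ← Finset.mul_prod_erase T _ hiT, ← Finset.mul_prod_erase T _ hiT]
      have h1 : x' i = !(x i) := Function.update_self i _ x
      have h2 : ∀ j ∈ T.erase i, sgn (x' j) = sgn (x j) := by
        intro j hj
        rw [hx', Function.update_of_ne (Finset.ne_of_mem_erase hj)]
      rw [Finset.prod_congr rfl h2, h1, sgn_not]
      ring
    rw [hf]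
    show juntaPMF M m A S x' * chi T x' = -(juntaPMF M m A S x * chi T x)
    simp only [juntaPMF, hbit, hchi]
    ring
  have h0 : ∑ x, f ((hinv.toPerm _) x) = ∑ x, f x := Equiv.sum_comp _ f
  have h1 : ∑ x, f ((hinv.toPerm _) x) = - ∑ x, f x := by
    have hh : ∀ x : Fin M → Bool, f ((hinv.toPerm _) x) = - f x := by
      intro x
      simpa [Function.Involutive.coe_toPerm] using hneg x
    rw [Finset.sum_congr rfl (fun x _ => hh x)]
    simp
  have h2 := h0.symm.trans h1
  linarith

lemma fhat_subset {M m : ℕ} (hmM : m ≤ M) (A : ℕ → ℝ) (S T : Finset (Fin M))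
    (hS : S.card = m) (hT : T ⊆ S) :
    ∑ x, juntaPMF M m A S x * chi T x
      = (∑ w ∈ Finset.range (m + 1), A w * kravchuk m T.card w) / (m.choose T.card : ℝ) := by
  set t := T.card with htdef
  have htm : t ≤ m := hS ▸ Finset.card_le_card hT
  have hrw : ∀ x : Fin M → Bool,
      juntaPMF M m A S x * chi T x
        = (fun X : Finset (Fin M) =>
            (fun w => (2:ℝ) ^ m / 2 ^ M * A w / (m.choose w : ℝ)) ((S ∩ X).card)
              * ((-1:ℝ)) ^ ((T ∩ X).card)) (toSet x) := by
    intro x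
    simp only [juntaPMF, chi_eq_toSet, bitSum_eq]
  rw [Finset.sum_congr rfl (fun x _ => hrw x),
    sum_toSet (fun X : Finset (Fin M) =>
      (fun w => (2:ℝ) ^ m / 2 ^ M * A w / (m.choose w : ℝ)) ((S ∩ X).card)
        * ((-1:ℝ)) ^ ((T ∩ X).card)),
    master S T hT (fun w => (2:ℝ) ^ m / 2 ^ M * A w / (m.choose w : ℝ)), hS]
  have hcard : Fintype.card (Fin M) = M := Fintype.card_fin M
  rw [hcard]
  have hterm : ∀ w ∈ Finset.range (m + 1),
      (2:ℝ) ^ (M - m) * (((2:ℝ) ^ m / 2 ^ M * A w / (m.choose w : ℝ)) * kravchuk m w t)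
        = A w * kravchuk m t w / (m.choose t : ℝ) := by
    intro w hw
    rw [Finset.mem_range] at hw
    have hwm : w ≤ m := by omega
    have hcw : (m.choose w : ℝ) ≠ 0 := by
      exact_mod_cast Nat.choose_pos hwm |>.ne'
    have hct : (m.choose t : ℝ) ≠ 0 := by
      exact_mod_cast Nat.choose_pos htm |>.ne'
    have h2M : ((2:ℝ)) ^ (M - m) * (2:ℝ) ^ m = (2:ℝ) ^ M := pow_sub_mul_pow 2 hmM
    have hrec := reciprocity m t w htm hwm
    have h2Mne : ((2:ℝ)) ^ M ≠ 0 := by positivity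
    have e1 : (2:ℝ) ^ (M - m) * ((2:ℝ) ^ m / 2 ^ M) = 1 := by
      rw [mul_div_assoc', h2M, div_self h2Mne]
    calc (2:ℝ) ^ (M - m) * (((2:ℝ) ^ m / 2 ^ M * A w / (m.choose w : ℝ)) * kravchuk m w t)
        = ((2:ℝ) ^ (M - m) * ((2:ℝ) ^ m / 2 ^ M)) * (A w / (m.choose w : ℝ) * kravchuk m w t) := by
          ring
      _ = A w / (m.choose w : ℝ) * kravchuk m w t := by rw [e1, one_mul]
      _ = A w * kravchuk m t w / (m.choose t : ℝ) := by
          field_simp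
          linear_combination (A w) * hrec
  rw [Finset.mul_sum, Finset.sum_congr rfl hterm, ← Finset.sum_div]

end CorrAux

namespace CorrAux

noncomputable def mom (m : ℕ) (A : ℕ → ℝ) (t : ℕ) : ℝ :=
  ∑ w ∈ Finset.range (m + 1), A w * kravchuk m t w

lemma mom_zero (m : ℕ) (A : ℕ → ℝ) (hA1 : ∑ x ∈ Finset.range (m + 1), A x = 1) :
    mom m A 0 = 1 := by
  rw [mom, ← hA1]
  apply Finset.sum_congr rfl
  intro w _
  rw [kravchuk_zero', mul_one]

/-- Sum over all subsets of a function of the cardinality. -/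
lemma sum_card {α : Type*} [DecidableEq α] [Fintype α] (h : ℕ → ℝ) :
    ∑ T : Finset α, h T.card
      = ∑ t ∈ Finset.range (Fintype.card α + 1), (Fintype.card α).choose t * h t := by
  rw [← Finset.powerset_univ, Finset.sum_powerset, Finset.card_univ]
  apply Finset.sum_congr rfl
  intro t _
  have hc : ∀ T ∈ (Finset.univ : Finset α).powersetCard t, h T.card = h t := by
    intro T hT
    rw [Finset.mem_powersetCard] at hT
    rw [hT.2]
  rw [Finset.sum_congr rfl hc, Finset.sum_const, nsmul_eq_mul,
    Finset.card_powersetCard, Finset.card_univ]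

lemma chiSq_id (m : ℕ) (A : ℕ → ℝ)
    (hA1 : ∑ x ∈ Finset.range (m + 1), A x = 1) :
    chiSqNat m A (binPMF m (1 / 2))
      = ∑ i ∈ Finset.range m, (mom m A (i + 1)) ^ 2 / (m.choose (i + 1) : ℝ) := by
  have hcard : (Finset.univ : Finset (Fin m)).card = m := by
    rw [Finset.card_univ, Fintype.card_fin]
  have h2m : ((2:ℝ)) ^ m ≠ 0 := by positivity
  -- Parseval for P = juntaPMF m m A univ
  have hpar := parseval (M := m) (juntaPMF m m A Finset.univ) (juntaPMF m m A Finset.univ)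
  have hfh : ∀ T : Finset (Fin m),
      (∑ x, juntaPMF m m A Finset.univ x * chi T x)
        = mom m A T.card / (m.choose T.card : ℝ) := by
    intro T
    rw [fhat_subset (le_refl m) A Finset.univ T hcard (Finset.subset_univ T), mom]
  rw [Finset.sum_congr rfl (fun T _ => by rw [hfh T])] at hpar
  -- LHS of parseval
  have hL : ∑ T : Finset (Fin m), (mom m A T.card / (m.choose T.card : ℝ))
        * (mom m A T.card / (m.choose T.card : ℝ))
      = ∑ t ∈ Finset.range (m + 1),
          (m.choose t : ℝ) * ((mom m A t / (m.choose t : ℝ)) * (mom m A t / (m.choose t : ℝ))) := by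
    rw [sum_card (fun t => (mom m A t / (m.choose t : ℝ)) * (mom m A t / (m.choose t : ℝ)))]
    rw [Fintype.card_fin]
  -- RHS of parseval: compute ∑_x P x * P x
  have hR : ∑ x, juntaPMF m m A Finset.univ x * juntaPMF m m A Finset.univ x
      = ∑ w ∈ Finset.range (m + 1),
          (A w / (m.choose w : ℝ)) ^ 2 * (m.choose w : ℝ) := by
    have hrw : ∀ x : Fin m → Bool,
        juntaPMF m m A Finset.univ x * juntaPMF m m A Finset.univ x
          = (fun X : Finset (Fin m) =>
              (fun w => (A w / (m.choose w : ℝ)) ^ 2) ((Finset.univ ∩ X).card)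
                * ((-1:ℝ)) ^ (((∅ : Finset (Fin m)) ∩ X).card)) (toSet x) := by
      intro x
      simp only [juntaPMF, bitSum_eq, Finset.empty_inter, Finset.card_empty, pow_zero,
        mul_one, div_self h2m]
      ring
    rw [Finset.sum_congr rfl (fun x _ => hrw x),
      sum_toSet (fun X : Finset (Fin m) =>
              (fun w => (A w / (m.choose w : ℝ)) ^ 2) ((Finset.univ ∩ X).card)
                * ((-1:ℝ)) ^ (((∅ : Finset (Fin m)) ∩ X).card)),
      master Finset.univ ∅ (Finset.empty_subset _) (fun w => (A w / (m.choose w : ℝ)) ^ 2),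
      hcard, Fintype.card_fin, Nat.sub_self, pow_zero, one_mul]
    apply Finset.sum_congr rfl
    intro w _
    rw [Finset.card_empty, kravchuk_zero]
  rw [hL, hR, Finset.mul_sum] at hpar
  -- identify chiSq + 1
  have hbin : ∀ w ∈ Finset.range (m + 1),
      (A w) ^ 2 / binPMF m (1/2) w
        = (2:ℝ) ^ m * ((A w / (m.choose w : ℝ)) ^ 2 * (m.choose w : ℝ)) := by
    intro w hw
    rw [Finset.mem_range] at hw
    have hwm : w ≤ m := by omega
    have hcw : (m.choose w : ℝ) ≠ 0 := by
      exact_mod_cast Nat.choose_pos hwm |>.ne'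
    rw [binPMF]
    have : (1 : ℝ) - 1/2 = 1/2 := by norm_num
    rw [this, mul_assoc, ← pow_add, Nat.add_sub_cancel' hwm]
    have h12 : ((1:ℝ)/2) ^ m = 1 / 2 ^ m := by rw [div_pow, one_pow]
    rw [h12]
    field_simp
  have hterm : ∀ t ∈ Finset.range (m + 1),
      (m.choose t : ℝ) * (mom m A t / (m.choose t : ℝ) * (mom m A t / (m.choose t : ℝ)))
        = mom m A t ^ 2 / (m.choose t : ℝ) := by
    intro t ht
    rw [Finset.mem_range] at ht
    have hct : (m.choose t : ℝ) ≠ 0 := by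
      exact_mod_cast (Nat.choose_pos (by omega : t ≤ m)).ne'
    field_simp
  rw [chiSqNat, Finset.sum_congr rfl hbin, ← hpar, Finset.sum_congr rfl hterm,
    Finset.sum_range_succ' (fun t => mom m A t ^ 2 / (m.choose t : ℝ)) m,
    mom_zero m A hA1]
  norm_num

end CorrAux

namespace CorrAux

lemma corr_id {M m : ℕ} (hmM : m ≤ M) (A : ℕ → ℝ)
    (hA1 : ∑ x ∈ Finset.range (m + 1), A x = 1)
    (S S' : Finset (Fin M)) (hS : S.card = m) (hS' : S'.card = m) :
    chiCorr (juntaPMF M m A S) (juntaPMF M m A S') (uniformPMF M)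
      = ∑ i ∈ Finset.range (S ∩ S').card,
          ((S ∩ S').card.choose (i + 1) : ℝ) * (mom m A (i + 1) / (m.choose (i + 1) : ℝ)) ^ 2 := by
  have h2M : ((2:ℝ)) ^ M ≠ 0 := by positivity
  have step1 : ∀ x : Fin M → Bool,
      juntaPMF M m A S x * juntaPMF M m A S' x / uniformPMF M x
        = (2:ℝ) ^ M * (juntaPMF M m A S x * juntaPMF M m A S' x) := by
    intro x
    rw [uniformPMF, div_div_eq_mul_div, div_one]
    ring
  rw [chiCorr, Finset.sum_congr rfl (fun x _ => step1 x), ← Finset.mul_sum, ← parseval]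
  have step2 : ∀ T : Finset (Fin M),
      (∑ x, juntaPMF M m A S x * chi T x) * (∑ y, juntaPMF M m A S' y * chi T y)
        = if T ⊆ S ∩ S' then
            ((mom m A T.card / (m.choose T.card : ℝ)) ^ 2) else 0 := by
    intro T
    split_ifs with h
    · have hTS : T ⊆ S := h.trans Finset.inter_subset_left
      have hTS' : T ⊆ S' := h.trans Finset.inter_subset_right
      rw [fhat_subset hmM A S T hS hTS, fhat_subset hmM A S' T hS' hTS', ← mom, sq]
    · rcases (by
        by_contra hc
        push_neg at hc
        exact h (Finset.subset_inter hc.1 hc.2) : ¬ T ⊆ S ∨ ¬ T ⊆ S') with h1 | h1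
      · rw [fhat_not_subset A S T h1, zero_mul]
      · rw [fhat_not_subset A S' T h1, mul_zero]
  rw [Finset.sum_congr rfl (fun T _ => step2 T)]
  have step3 : ∑ T : Finset (Fin M),
      (if T ⊆ S ∩ S' then ((mom m A T.card / (m.choose T.card : ℝ)) ^ 2) else 0)
      = ∑ T ∈ (S ∩ S').powerset, (mom m A T.card / (m.choose T.card : ℝ)) ^ 2 := by
    rw [← Finset.sum_filter]
    have hfe : Finset.univ.filter (fun a : Finset (Fin M) => a ⊆ S ∩ S') = (S ∩ S').powerset := by
      ext T; simp only [Finset.mem_filter, Finset.mem_univ, true_and, Finset.mem_powerset]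
    rw [hfe]
  rw [step3, Finset.sum_powerset]
  have step4 : ∀ t ∈ Finset.range ((S ∩ S').card + 1),
      (∑ T ∈ Finset.powersetCard t (S ∩ S'), (mom m A T.card / (m.choose T.card : ℝ)) ^ 2)
        = ((S ∩ S').card.choose t : ℝ) * (mom m A t / (m.choose t : ℝ)) ^ 2 := by
    intro t _
    have hc : ∀ T ∈ Finset.powersetCard t (S ∩ S'),
        (mom m A T.card / (m.choose T.card : ℝ)) ^ 2
          = (mom m A t / (m.choose t : ℝ)) ^ 2 := by
      intro T hT
      rw [Finset.mem_powersetCard] at hT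
      rw [hT.2]
    rw [Finset.sum_congr rfl hc, Finset.sum_const, nsmul_eq_mul, Finset.card_powersetCard]
  rw [Finset.sum_congr rfl step4,
    Finset.sum_range_succ' (fun t => ((S ∩ S').card.choose t : ℝ) * (mom m A t / (m.choose t : ℝ)) ^ 2)
      (S ∩ S').card, mom_zero m A hA1]
  norm_num

end CorrAux

namespace CorrAux

lemma choose_ratio_nat (si m : ℕ) (h : si ≤ m) :
    ∀ t, m ^ t * si.choose t ≤ si ^ t * m.choose t := by
  intro t
  induction t with
  | zero => simp
  | succ t ih =>
    rcases le_or_gt si t with hst | hst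
    · rw [Nat.choose_eq_zero_of_lt (by omega), Nat.mul_zero]
      exact Nat.zero_le _
    · have hfac : m * (si - t) ≤ si * (m - t) := by
        obtain ⟨a, ha⟩ : ∃ a, si = a + t := ⟨si - t, by omega⟩
        obtain ⟨b, hb⟩ : ∃ b, m = b + t := ⟨m - t, by omega⟩
        subst ha; subst hb
        have hab : a ≤ b := by omega
        simp only [Nat.add_sub_cancel]
        nlinarith
      have e1 : (m ^ (t+1) * si.choose (t+1)) * (t+1)
          = (m * (si - t)) * (m ^ t * si.choose t) := by
        rw [mul_assoc (m ^ (t+1)), Nat.choose_succ_right_eq, pow_succ]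
        ring
      have e2 : (si ^ (t+1) * m.choose (t+1)) * (t+1)
          = (si * (m - t)) * (si ^ t * m.choose t) := by
        rw [mul_assoc (si ^ (t+1)), Nat.choose_succ_right_eq, pow_succ]
        ring
      have key : (m ^ (t+1) * si.choose (t+1)) * (t+1)
          ≤ (si ^ (t+1) * m.choose (t+1)) * (t+1) := by
        rw [e1, e2]
        exact Nat.mul_le_mul hfac ih
      exact Nat.le_of_mul_le_mul_right key (Nat.succ_pos t)

lemma choose_ratio_real (si m t : ℕ) (h : si ≤ m) (hm : 0 < m) (ht : t ≤ m) :
    (si.choose t : ℝ) / (m.choose t : ℝ) ≤ ((si : ℝ) / m) ^ t := by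
  have hct : (0:ℝ) < (m.choose t : ℝ) := by exact_mod_cast Nat.choose_pos ht
  have hmp : (0:ℝ) < ((m : ℝ)) ^ t := by positivity
  rw [div_pow, div_le_div_iff₀ hct hmp]
  have := choose_ratio_nat si m h t
  calc ((si.choose t : ℝ)) * (m:ℝ) ^ t = ((m ^ t * si.choose t : ℕ) : ℝ) := by push_cast; ring
      _ ≤ ((si ^ t * m.choose t : ℕ) : ℝ) := by exact_mod_cast this
      _ = (si:ℝ) ^ t * (m.choose t : ℝ) := by push_cast; ring

end CorrAux

/-- Correlation Lemma: if `A` approximately matches the first `k` moments with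
`Bin(m,1/2)` (in the Kravchuk sense), then the hidden junta distributions indexed by
`m`-element subsets `S, S'` of `[M]` are nearly orthogonal relative to `U_M`. -/
theorem correlation_lemma (k m M : ℕ) (hk : 0 < k) (hkm : k ≤ m) (hmM : m ≤ M)
    (ν : ℝ) (hν : 0 < ν) (A : ℕ → ℝ)
    (hA0 : ∀ x, 0 ≤ A x) (hAsupp : ∀ x, m < x → A x = 0)
    (hA1 : ∑ x ∈ Finset.range (m + 1), A x = 1)
    (hmom : ∀ t, 1 ≤ t → t ≤ k →
      |∑ x ∈ Finset.range (m + 1), A x * kravchuk m t x| ≤ ν)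
    (S S' : Finset (Fin M)) (hS : S.card = m) (hS' : S'.card = m) :
    |chiCorr (juntaPMF M m A S) (juntaPMF M m A S') (uniformPMF M)| ≤
      (((S ∩ S').card : ℝ) / (m : ℝ)) ^ (k + 1) *
        chiSqNat m A (binPMF m (1 / 2)) + (k : ℝ) * ν ^ 2 := by
  classical
  set si := (S ∩ S').card with hsidef
  have hsim : si ≤ m := hS ▸ Finset.card_le_card Finset.inter_subset_left
  have hm : 0 < m := lt_of_lt_of_le hk hkm
  set c : ℕ → ℝ := fun i =>
    (si.choose (i + 1) : ℝ) * (CorrAux.mom m A (i + 1) / (m.choose (i + 1) : ℝ)) ^ 2 with hc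
  have hcorr : chiCorr (juntaPMF M m A S) (juntaPMF M m A S') (uniformPMF M)
      = ∑ i ∈ Finset.range si, c i := CorrAux.corr_id hmM A hA1 S S' hS hS'
  have hcnonneg : ∀ i, 0 ≤ c i := by
    intro i
    apply mul_nonneg (by positivity) (sq_nonneg _)
  have habs : |chiCorr (juntaPMF M m A S) (juntaPMF M m A S') (uniformPMF M)|
      = ∑ i ∈ Finset.range si, c i := by
    rw [hcorr, abs_of_nonneg (Finset.sum_nonneg fun i _ => hcnonneg i)]
  rw [habs]
  -- chi squared
  set d : ℕ → ℝ := fun i => (CorrAux.mom m A (i + 1)) ^ 2 / (m.choose (i + 1) : ℝ) with hd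
  have hchisq : chiSqNat m A (binPMF m (1 / 2)) = ∑ i ∈ Finset.range m, d i :=
    CorrAux.chiSq_id m A hA1
  have hdnonneg : ∀ i, 0 ≤ d i := fun i => div_nonneg (sq_nonneg _) (by positivity)
  -- split the sum
  rw [← Finset.sum_filter_add_sum_filter_not (Finset.range si) (fun i => i < k) c]
  have hratio_nonneg : (0:ℝ) ≤ (si : ℝ) / m := by positivity
  have hratio_le_one : (si : ℝ) / m ≤ 1 := by
    rw [div_le_one (by exact_mod_cast hm)]
    exact_mod_cast hsim
  -- Part A : small t
  have hA' : ∑ i ∈ (Finset.range si).filter (fun i => i < k), c i ≤ (k:ℝ) * ν ^ 2 := by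
    have hterm : ∀ i ∈ (Finset.range si).filter (fun i => i < k), c i ≤ ν ^ 2 := by
      intro i hi
      rw [Finset.mem_filter, Finset.mem_range] at hi
      have ht1 : 1 ≤ i + 1 := by omega
      have htk : i + 1 ≤ k := by omega
      have htm : i + 1 ≤ m := by omega
      have hmompos := hmom (i + 1) ht1 htk
      have hcmt : (1:ℝ) ≤ (m.choose (i+1) : ℝ) := by
        exact_mod_cast Nat.one_le_iff_ne_zero.mpr (Nat.choose_pos htm).ne'
      have hcle : (si.choose (i+1) : ℝ) ≤ (m.choose (i+1) : ℝ) := by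
        exact_mod_cast Nat.choose_le_choose (i+1) hsim
      have hmsq : (CorrAux.mom m A (i+1)) ^ 2 ≤ ν ^ 2 := by
        rw [← CorrAux.mom] at hmompos
        calc (CorrAux.mom m A (i+1)) ^ 2 = |CorrAux.mom m A (i+1)| ^ 2 := (sq_abs _).symm
          _ ≤ ν ^ 2 := by
            apply pow_le_pow_left₀ (abs_nonneg _) hmompos
      have hcmpos : (0:ℝ) < (m.choose (i+1) : ℝ) := by linarith
      calc c i = (si.choose (i+1) : ℝ) * ((CorrAux.mom m A (i+1)) ^ 2 / (m.choose (i+1) : ℝ) ^ 2) := by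
            rw [hc]; ring
        _ ≤ (m.choose (i+1) : ℝ) * ((CorrAux.mom m A (i+1)) ^ 2 / (m.choose (i+1) : ℝ) ^ 2) := by
            apply mul_le_mul_of_nonneg_right hcle
            positivity
        _ = (CorrAux.mom m A (i+1)) ^ 2 / (m.choose (i+1) : ℝ) := by
            field_simp
        _ ≤ (CorrAux.mom m A (i+1)) ^ 2 := by
            apply div_le_self (sq_nonneg _) hcmt
        _ ≤ ν ^ 2 := hmsq
    calc ∑ i ∈ (Finset.range si).filter (fun i => i < k), c i
        ≤ ∑ i ∈ (Finset.range si).filter (fun i => i < k), ν ^ 2 := Finset.sum_le_sum hterm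
      _ = ((Finset.range si).filter (fun i => i < k)).card * ν ^ 2 := by
          rw [Finset.sum_const, nsmul_eq_mul]
      _ ≤ (k:ℝ) * ν ^ 2 := by
          apply mul_le_mul_of_nonneg_right _ (sq_nonneg ν)
          have hsub : (Finset.range si).filter (fun i => i < k) ⊆ Finset.range k := by
            intro i hi
            rw [Finset.mem_filter, Finset.mem_range] at hi
            rw [Finset.mem_range]
            exact hi.2
          have := Finset.card_le_card hsub
          rw [Finset.card_range] at this
          exact_mod_cast this
  -- Part B : large t
  have hB : ∑ i ∈ (Finset.range si).filter (fun i => ¬ i < k), c i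
      ≤ ((si : ℝ) / m) ^ (k + 1) * chiSqNat m A (binPMF m (1 / 2)) := by
    have hterm : ∀ i ∈ (Finset.range si).filter (fun i => ¬ i < k),
        c i ≤ ((si : ℝ) / m) ^ (k + 1) * d i := by
      intro i hi
      rw [Finset.mem_filter, Finset.mem_range] at hi
      have hik : k ≤ i := by omega
      have htm : i + 1 ≤ m := by omega
      have hcmpos : (0:ℝ) < (m.choose (i+1) : ℝ) := by
        exact_mod_cast Nat.choose_pos htm
      have hrr : (si.choose (i+1) : ℝ) / (m.choose (i+1) : ℝ) ≤ ((si:ℝ)/m) ^ (k+1) := by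
        calc (si.choose (i+1) : ℝ) / (m.choose (i+1) : ℝ)
            ≤ ((si:ℝ)/m) ^ (i+1) := CorrAux.choose_ratio_real si m (i+1) hsim hm htm
          _ ≤ ((si:ℝ)/m) ^ (k+1) :=
              pow_le_pow_of_le_one hratio_nonneg hratio_le_one (by omega)
      have key : ∀ (a b cm : ℝ), cm ≠ 0 → a * (b / cm) ^ 2 = (a / cm) * (b ^ 2 / cm) := by
        intro a b cm hcm
        rw [div_pow, sq cm, mul_div_assoc', div_mul_div_comm]
      calc c i = ((si.choose (i+1) : ℝ) / (m.choose (i+1) : ℝ)) * d i := by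
            rw [hc, hd]
            exact key _ _ _ hcmpos.ne'
        _ ≤ ((si:ℝ)/m) ^ (k+1) * d i :=
            mul_le_mul_of_nonneg_right hrr (hdnonneg i)
    calc ∑ i ∈ (Finset.range si).filter (fun i => ¬ i < k), c i
        ≤ ∑ i ∈ (Finset.range si).filter (fun i => ¬ i < k), ((si : ℝ) / m) ^ (k + 1) * d i :=
          Finset.sum_le_sum hterm
      _ = ((si : ℝ) / m) ^ (k + 1) * ∑ i ∈ (Finset.range si).filter (fun i => ¬ i < k), d i := by
          rw [Finset.mul_sum]
      _ ≤ ((si : ℝ) / m) ^ (k + 1) * ∑ i ∈ Finset.range m, d i := by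
          apply mul_le_mul_of_nonneg_left _ (by positivity)
          apply Finset.sum_le_sum_of_subset_of_nonneg
          · intro i hi
            rw [Finset.mem_filter, Finset.mem_range] at hi
            rw [Finset.mem_range]
            omega
          · intro i _ _
            exact hdnonneg i
      _ = ((si : ℝ) / m) ^ (k + 1) * chiSqNat m A (binPMF m (1 / 2)) := by rw [hchisq]
  linarith
end

section
/- Let m < M be positive integers, let A be a probability distribution on {0,1,...,m}, and let S ⊆ {1,...,M} with |S| = m. Then χ²(P_S^A, U_M) = χ²(A, Bin(m,1/2)); equivalently, 2^M Σ_{x∈{0,1}^M} P_S^A(x)² = 2^m Σ_{j=0}^m A(j)²/binom(m,j). -/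
open Finset

/-- Chi-squared divergence for distributions on `{0,1}^M`. -/
noncomputable def chiSqCube (M : ℕ) (P Q : (Fin M → Bool) → ℝ) : ℝ :=
  (∑ x : Fin M → Bool, (P x) ^ 2 / Q x) - 1

open Finset

private lemma fiber_card {M : ℕ} (S T : Finset (Fin M)) (hT : T ⊆ S) :
    (Finset.univ.filter fun x : Fin M → Bool =>
      (S.filter fun i => x i = true) = T).card = 2 ^ (M - S.card) := by
  rw [← Fintype.card_subtype]
  have e : {x : Fin M → Bool // (S.filter fun i => x i = true) = T} ≃
      ({i : Fin M // i ∉ S} → Bool) := {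
    toFun := fun x i => x.1 i.1
    invFun := fun z => ⟨fun i => if h : i ∈ S then decide (i ∈ T) else z ⟨i, h⟩, by
      ext i
      simp only [mem_filter]
      constructor
      · rintro ⟨hiS, hi⟩
        rw [dif_pos hiS] at hi
        exact of_decide_eq_true hi
      · intro hiT
        refine ⟨hT hiT, ?_⟩
        rw [dif_pos (hT hiT)]
        exact decide_eq_true hiT⟩
    left_inv := by
      rintro ⟨x, hx⟩
      ext i
      simp only
      by_cases h : i ∈ S
      · rw [dif_pos h]
        have : x i = true ↔ i ∈ T := by
          rw [← hx]; simp [h]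
        by_cases hxi : x i = true
        · simp [hxi, decide_eq_true (this.1 hxi)]
        · simp only [Bool.not_eq_true] at hxi
          simp [hxi]
          intro hiT
          exact absurd (this.2 hiT) (by simp [hxi])
      · rw [dif_neg h]
    right_inv := by
      intro z
      funext i
      simp [dif_neg i.2] }
  rw [Fintype.card_congr e, Fintype.card_fun, Fintype.card_bool,
    Fintype.card_subtype_compl, Fintype.card_fin]
  congr 1
  rw [Fintype.card_coe]

private lemma sum_bitSum {M m : ℕ} (S : Finset (Fin M)) (hS : S.card = m) (f : ℕ → ℝ) :
    ∑ x : Fin M → Bool, f (bitSum S x) =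
      (2 : ℝ) ^ (M - m) * ∑ j ∈ Finset.range (m + 1), (m.choose j : ℝ) * f j := by
  have hmaps : ∀ x : Fin M → Bool, x ∈ Finset.univ →
      (S.filter fun i => x i = true) ∈ S.powerset := by
    intro x _; exact mem_powerset.2 (filter_subset _ _)
  rw [← Finset.sum_fiberwise_of_maps_to hmaps (fun x => f (bitSum S x))]
  have : ∀ T ∈ S.powerset,
      (∑ x ∈ Finset.univ.filter (fun x : Fin M → Bool =>
        (S.filter fun i => x i = true) = T), f (bitSum S x)) =
      (2 : ℝ) ^ (M - m) * f T.card := by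
    intro T hT
    rw [mem_powerset] at hT
    have : ∀ x ∈ Finset.univ.filter (fun x : Fin M → Bool =>
        (S.filter fun i => x i = true) = T), f (bitSum S x) = f T.card := by
      intro x hx
      rw [mem_filter] at hx
      rw [bitSum, hx.2]
    rw [Finset.sum_congr rfl this, Finset.sum_const, fiber_card S T hT, hS,
      nsmul_eq_mul]
    push_cast
    ring
  rw [Finset.sum_congr rfl this, ← Finset.mul_sum, Finset.sum_powerset, hS]
  congr 1
  refine Finset.sum_congr rfl fun j hj => ?_
  have : ∀ T ∈ S.powersetCard j, f T.card = f j := by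
    intro T hT
    rw [(Finset.mem_powersetCard.1 hT).2]
  rw [Finset.sum_congr rfl this, Finset.sum_const, Finset.card_powersetCard, hS,
    nsmul_eq_mul]

/-- `χ²(P_S^A, U_M) = χ²(A, Bin(m, 1/2))`; equivalently
`2^M Σ_x P_S^A(x)² = 2^m Σ_j A(j)²/binom(m,j)`. -/
theorem junta_chi_square (m M : ℕ) (hm : 0 < m) (hmM : m < M)
    (A : ℕ → ℝ) (hA0 : ∀ x, 0 ≤ A x) (hAsupp : ∀ x, m < x → A x = 0)
    (hA1 : ∑ x ∈ Finset.range (m + 1), A x = 1)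
    (S : Finset (Fin M)) (hS : S.card = m) :
    chiSqCube M (juntaPMF M m A S) (uniformPMF M) =
      chiSqNat m A (binPMF m (1 / 2)) ∧
    (2 : ℝ) ^ M * ∑ x : Fin M → Bool, (juntaPMF M m A S x) ^ 2 =
      (2 : ℝ) ^ m * ∑ j ∈ Finset.range (m + 1), (A j) ^ 2 / (m.choose j : ℝ) := by
  have hM : m ≤ M := hmM.le
  have key : ∑ x : Fin M → Bool, (juntaPMF M m A S x) ^ 2 =
      (2 : ℝ) ^ (M - m) * ∑ j ∈ Finset.range (m + 1), (m.choose j : ℝ) *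
        ((2 : ℝ) ^ m / (2 : ℝ) ^ M * A j / (m.choose j : ℝ)) ^ 2 := by
    exact sum_bitSum S hS (fun j => ((2 : ℝ) ^ m / (2 : ℝ) ^ M * A j / (m.choose j : ℝ)) ^ 2)
  have hpow : (2 : ℝ) ^ (M - m) * (2 : ℝ) ^ m = (2 : ℝ) ^ M := by
    rw [← pow_add, Nat.sub_add_cancel hM]
  have h2 : (2 : ℝ) ^ M * ∑ x : Fin M → Bool, (juntaPMF M m A S x) ^ 2 =
      (2 : ℝ) ^ m * ∑ j ∈ Finset.range (m + 1), (A j) ^ 2 / (m.choose j : ℝ) := by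
    rw [key, Finset.mul_sum, Finset.mul_sum, Finset.mul_sum]
    refine Finset.sum_congr rfl fun j hj => ?_
    have hjm : j ≤ m := Nat.lt_succ_iff.1 (Finset.mem_range.1 hj)
    have hc : (0 : ℝ) < (m.choose j : ℝ) := by
      exact_mod_cast Nat.choose_pos hjm
    have hMne : (2 : ℝ) ^ M ≠ 0 := by positivity
    field_simp
    rw [← hpow]
  refine ⟨?_, h2⟩
  unfold chiSqCube chiSqNat
  congr 1
  have hl : ∑ x : Fin M → Bool, (juntaPMF M m A S x) ^ 2 / uniformPMF M x =
      (2 : ℝ) ^ M * ∑ x : Fin M → Bool, (juntaPMF M m A S x) ^ 2 := by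
    rw [Finset.mul_sum]
    refine Finset.sum_congr rfl fun x _ => ?_
    rw [uniformPMF, div_div_eq_mul_div, div_one, mul_comm]
  rw [hl, h2, Finset.mul_sum]
  refine Finset.sum_congr rfl fun j hj => ?_
  have hjm : j ≤ m := Nat.lt_succ_iff.1 (Finset.mem_range.1 hj)
  have hbin : binPMF m (1 / 2) j = (m.choose j : ℝ) * (1 / 2 : ℝ) ^ m := by
    rw [binPMF]
    norm_num
    rw [mul_assoc, ← pow_add, Nat.add_sub_cancel' hjm]
  have hc : (0 : ℝ) < (m.choose j : ℝ) := by exact_mod_cast Nat.choose_pos hjm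
  rw [hbin, div_pow, one_pow, div_mul_eq_div_div, eq_div_iff (by positivity)]
  field_simp
end

section
/- Let m < M be positive integers, let A be a probability distribution on {0,1,...,m}, and let S, S' ⊆ {1,...,M} with |S| = |S'| = m. Then χ_{U_M}(P_S^A, P_{S'}^A) = Σ_{t=1}^{m} binom(|S∩S'|, t) · a_t² / binom(m,t)², where a_t := E_{X∼A}[K_t(X;m)] and binom(|S∩S'|,t) = 0 when t > |S∩S'|. -/
open Finset

lemma choose_sdiff_id (n a b : ℕ) :
    n.choose a * (n - a).choose b = n.choose b * (n - b).choose a := by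
  rcases le_or_gt (a + b) n with h | h
  · have h1 := Nat.choose_mul (n := n) (k := a + b) (s := a) (Nat.le_add_right a b)
    have h2 := Nat.choose_mul (n := n) (k := a + b) (s := b) (Nat.le_add_left b a)
    rw [Nat.add_sub_cancel_left] at h1
    rw [Nat.add_sub_cancel] at h2
    rw [← h1, ← h2, Nat.choose_symm_add]
  · rcases le_or_gt a n with ha | ha
    · rcases le_or_gt b n with hb | hb
      · rw [Nat.choose_eq_zero_of_lt (show n - a < b by omega),
            Nat.choose_eq_zero_of_lt (show n - b < a by omega)]
        simp
      · rw [Nat.choose_eq_zero_of_lt (show n - a < b by omega), Nat.choose_eq_zero_of_lt hb]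
        simp
    · rw [Nat.choose_eq_zero_of_lt ha, Nat.choose_eq_zero_of_lt (show n - b < a by omega)]
      simp

lemma choose_four (m w t j : ℕ) (hj : j ≤ t) (hj' : j ≤ w) (ht : t ≤ m) (hw : w ≤ m) :
    m.choose w * (w.choose j * (m - w).choose (t - j)) =
    m.choose t * (t.choose j * (m - t).choose (w - j)) := by
  have h1 := Nat.choose_mul (n := m) hj'
  have h2 := Nat.choose_mul (n := m) hj
  have key : (m - j).choose (w - j) * (m - w).choose (t - j)
      = (m - j).choose (t - j) * (m - t).choose (w - j) := by
    have e1 : m - w = (m - j) - (w - j) := by omega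
    have e2 : m - t = (m - j) - (t - j) := by omega
    rw [e1, e2, choose_sdiff_id]
  calc m.choose w * (w.choose j * (m - w).choose (t - j))
      = (m.choose w * w.choose j) * (m - w).choose (t - j) := by ring
    _ = m.choose j * ((m - j).choose (w - j) * (m - w).choose (t - j)) := by rw [h1]; ring
    _ = m.choose j * ((m - j).choose (t - j) * (m - t).choose (w - j)) := by rw [key]
    _ = (m.choose j * (m - j).choose (t - j)) * (m - t).choose (w - j) := by ring
    _ = _ := by rw [← h2]; ring

lemma kravchuk_recip (m t w : ℕ) (ht : t ≤ m) (hw : w ≤ m) :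
    (m.choose w : ℝ) * kravchuk m t w = (m.choose t : ℝ) * kravchuk m w t := by
  rw [kravchuk, kravchuk, Finset.mul_sum, Finset.mul_sum]
  trans ∑ j ∈ range (min t w + 1),
      (m.choose w : ℝ) * ((-1 : ℝ) ^ j * (w.choose j : ℝ) * ((m - w).choose (t - j) : ℝ))
  · symm
    apply Finset.sum_subset (Finset.range_subset_range.2 (by omega))
    intro j hj hj'
    have hwj : w < j := by simp only [mem_range, Nat.lt_succ_iff] at hj hj'; omega
    simp [Nat.choose_eq_zero_of_lt hwj]
  · trans ∑ j ∈ range (min t w + 1),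
        (m.choose t : ℝ) * ((-1 : ℝ) ^ j * (t.choose j : ℝ) * ((m - t).choose (w - j) : ℝ))
    · apply Finset.sum_congr rfl
      intro j hj
      have hj : j ≤ min t w := by simpa [Nat.lt_succ_iff] using hj
      have key : (m.choose w : ℝ) * ((w.choose j : ℝ) * ((m - w).choose (t - j) : ℝ)) =
          (m.choose t : ℝ) * ((t.choose j : ℝ) * ((m - t).choose (w - j) : ℝ)) := by
        exact_mod_cast congrArg (Nat.cast : ℕ → ℝ)
          (choose_four m w t j (by omega) (by omega) ht hw)
      linear_combination ((-1 : ℝ) ^ j) * key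
    · apply Finset.sum_subset (Finset.range_subset_range.2 (by omega))
      intro j hj hj'
      have htj : t < j := by simp only [mem_range, Nat.lt_succ_iff] at hj hj'; omega
      simp [Nat.choose_eq_zero_of_lt htj]

noncomputable def chr {M : ℕ} (T : Finset (Fin M)) (x : Fin M → Bool) : ℝ :=
  (-1 : ℝ) ^ (bitSum T x)

lemma bitSum_eq_sum {M : ℕ} (T : Finset (Fin M)) (x : Fin M → Bool) :
    bitSum T x = ∑ i ∈ T, (if x i = true then 1 else 0) := by
  rw [bitSum, Finset.card_filter]

lemma chr_eq_prod {M : ℕ} (T : Finset (Fin M)) (x : Fin M → Bool) :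
    chr T x = ∏ i ∈ T, (if x i = true then (-1 : ℝ) else 1) := by
  rw [chr, bitSum, ← Finset.prod_const, Finset.prod_filter]

lemma sum_chr_mul {M : ℕ} (x y : Fin M → Bool) :
    ∑ T : Finset (Fin M), chr T x * chr T y = if x = y then (2 : ℝ) ^ M else 0 := by
  have step1 : ∀ T : Finset (Fin M), chr T x * chr T y =
      ∏ i ∈ T, ((if x i = true then (-1 : ℝ) else 1) * (if y i = true then (-1 : ℝ) else 1)) := by
    intro T; rw [chr_eq_prod, chr_eq_prod, ← Finset.prod_mul_distrib]
  simp only [step1]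
  have step2 : ∑ T : Finset (Fin M),
      ∏ i ∈ T, ((if x i = true then (-1 : ℝ) else 1) * (if y i = true then (-1 : ℝ) else 1))
      = ∏ i : Fin M, (((if x i = true then (-1 : ℝ) else 1) * (if y i = true then (-1 : ℝ) else 1)) + 1) := by
    rw [Finset.prod_add]
    rw [Finset.powerset_univ]
    apply Finset.sum_congr rfl
    intro T _
    simp
  rw [step2]
  have step3 : ∀ i : Fin M,
      (((if x i = true then (-1 : ℝ) else 1) * (if y i = true then (-1 : ℝ) else 1)) + 1)
      = if x i = y i then 2 else 0 := by
    intro i; cases hx : x i <;> cases hy : y i <;> norm_num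
  simp only [step3]
  by_cases h : x = y
  · subst h
    simp [Finset.prod_const]
  · rw [if_neg h]
    obtain ⟨i, hi⟩ : ∃ i, x i ≠ y i := by
      by_contra hc; push_neg at hc; exact h (funext hc)
    exact Finset.prod_eq_zero (Finset.mem_univ i) (by rw [if_neg hi])

noncomputable def hatP {M : ℕ} (P : (Fin M → Bool) → ℝ) (T : Finset (Fin M)) : ℝ :=
  ∑ x, P x * chr T x

lemma parseval {M : ℕ} (P Q : (Fin M → Bool) → ℝ) :
    ∑ T : Finset (Fin M), hatP P T * hatP Q T = (2 : ℝ) ^ M * ∑ x, P x * Q x := by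
  simp only [hatP, Finset.sum_mul_sum]
  rw [Finset.sum_comm]
  have inner : ∀ x : Fin M → Bool,
      ∑ y : Fin M → Bool, ∑ T : Finset (Fin M), (P x * chr T x) * (Q y * chr T y)
      = (2 : ℝ) ^ M * (P x * Q x) := by
    intro x
    have : ∀ y : Fin M → Bool, ∑ T : Finset (Fin M), (P x * chr T x) * (Q y * chr T y)
        = (P x * Q y) * if x = y then (2 : ℝ) ^ M else 0 := by
      intro y
      rw [← sum_chr_mul x y, Finset.mul_sum]
      apply Finset.sum_congr rfl; intro T _; ring
    simp only [this, mul_ite, mul_zero]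
    rw [Finset.sum_ite_eq (Finset.univ : Finset (Fin M → Bool)) x (fun y => P x * Q y * (2:ℝ)^M)]
    simp [mul_comm, mul_left_comm]
  calc ∑ x : Fin M → Bool, ∑ T : Finset (Fin M), ∑ y : Fin M → Bool, (P x * chr T x) * (Q y * chr T y)
      = ∑ x : Fin M → Bool, ∑ y : Fin M → Bool, ∑ T : Finset (Fin M), (P x * chr T x) * (Q y * chr T y) := by
        exact Finset.sum_congr rfl fun x _ => Finset.sum_comm
    _ = ∑ x : Fin M → Bool, (2 : ℝ) ^ M * (P x * Q x) := Finset.sum_congr rfl fun x _ => inner x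
    _ = (2 : ℝ) ^ M * ∑ x, P x * Q x := by rw [Finset.mul_sum]

lemma bitSum_update_notMem {M : ℕ} {T : Finset (Fin M)} {i : Fin M} (h : i ∉ T)
    (x : Fin M → Bool) (b : Bool) : bitSum T (Function.update x i b) = bitSum T x := by
  rw [bitSum_eq_sum, bitSum_eq_sum]
  apply Finset.sum_congr rfl
  intro a ha
  have : a ≠ i := fun e => h (e ▸ ha)
  rw [Function.update_of_ne this]

lemma chr_update_flip {M : ℕ} {T : Finset (Fin M)} {i : Fin M} (h : i ∈ T)
    (x : Fin M → Bool) : chr T (Function.update x i (!x i)) = - chr T x := by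
  have key : ∀ z : Fin M → Bool,
      bitSum T z = (∑ a ∈ T.erase i, (if z a = true then 1 else 0)) + (if z i = true then 1 else 0) := by
    intro z
    rw [bitSum_eq_sum, ← Finset.sum_erase_add _ _ h]
  have he : ∀ b : Bool, ∑ a ∈ T.erase i, (if Function.update x i b a = true then 1 else 0)
      = ∑ a ∈ T.erase i, (if x a = true then (1:ℕ) else 0) := by
    intro b
    apply Finset.sum_congr rfl
    intro a ha
    rw [Function.update_of_ne (Finset.ne_of_mem_erase ha)]
  rw [chr, chr, key, key, he, Function.update_self]
  cases hx : x i <;> simp [pow_succ]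

lemma sum_flip {M : ℕ} (i : Fin M) (f : (Fin M → Bool) → ℝ)
    (hf : ∀ x, f (Function.update x i (!x i)) = - f x) :
    ∑ x : Fin M → Bool, f x = 0 := by
  have inv : Function.Involutive (fun x : Fin M → Bool => Function.update x i (!x i)) := by
    intro x
    funext j
    by_cases hj : j = i
    · subst hj; simp
    · simp [Function.update_of_ne hj]
  have h1 : ∑ x : Fin M → Bool, f (Function.update x i (!x i)) = ∑ x : Fin M → Bool, f x :=
    Equiv.sum_comp (Function.Involutive.toPerm _ inv) f
  have h2 : ∑ x : Fin M → Bool, f (Function.update x i (!x i)) = - ∑ x : Fin M → Bool, f x := by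
    simp only [hf, Finset.sum_neg_distrib]
  linarith

lemma sum_split {α : Type*} [DecidableEq α] (u s : Finset α) (hs : s ⊆ u)
    (F : Finset α → Finset α → ℝ) :
    ∑ U ∈ u.powerset, F (U ∩ s) (U \ s) = ∑ V ∈ s.powerset, ∑ W ∈ (u \ s).powerset, F V W := by
  rw [← Finset.sum_product']
  apply Finset.sum_bij' (i := fun U _ => (U ∩ s, U \ s)) (j := fun p _ => p.1 ∪ p.2)
  · intro U hU
    rw [Finset.mem_powerset] at hU
    rw [Finset.mem_product, Finset.mem_powerset, Finset.mem_powerset]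
    exact ⟨Finset.inter_subset_right, Finset.sdiff_subset_sdiff hU (le_refl s)⟩
  · intro p hp
    rw [Finset.mem_product, Finset.mem_powerset, Finset.mem_powerset] at hp
    rw [Finset.mem_powerset]
    exact Finset.union_subset (hp.1.trans hs) (hp.2.trans Finset.sdiff_subset)
  · intro U hU
    ext a
    simp only [Finset.mem_union, Finset.mem_inter, Finset.mem_sdiff]
    tauto
  · intro p hp
    rw [Finset.mem_product, Finset.mem_powerset, Finset.mem_powerset] at hp
    have h1 : ∀ a ∈ p.2, a ∉ s := fun a ha => (Finset.mem_sdiff.1 (hp.2 ha)).2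
    have h2 : ∀ a ∈ p.1, a ∈ s := fun a ha => hp.1 ha
    have e1 : (p.1 ∪ p.2) ∩ s = p.1 := by
      ext a
      simp only [Finset.mem_inter, Finset.mem_union]
      constructor
      · rintro ⟨h | h, hs'⟩
        · exact h
        · exact absurd hs' (h1 a h)
      · intro h; exact ⟨Or.inl h, h2 a h⟩
    have e2 : (p.1 ∪ p.2) \ s = p.2 := by
      ext a
      simp only [Finset.mem_sdiff, Finset.mem_union]
      constructor
      · rintro ⟨h | h, hs'⟩
        · exact absurd (h2 a h) hs'
        · exact h
      · intro h; exact ⟨Or.inr h, h1 a h⟩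
    rw [e1, e2]
  · intro U hU
    rfl

lemma triangle (n : ℕ) (g : ℕ → ℕ → ℝ) (h0 : ∀ j v, n < j + v → g j v = 0) :
    ∑ j ∈ range (n + 1), ∑ v ∈ range (n + 1), g j v
      = ∑ w ∈ range (n + 1), ∑ j ∈ range (w + 1), g j (w - j) := by
  rw [← Finset.sum_product', Finset.sum_sigma']
  rw [show (range (n+1) ×ˢ range (n+1)) = (range (n+1) ×ˢ range (n+1)) from rfl]
  have step : ∑ p ∈ range (n+1) ×ˢ range (n+1), g p.1 p.2
      = ∑ p ∈ (range (n+1) ×ˢ range (n+1)).filter (fun p => p.1 + p.2 ≤ n), g p.1 p.2 := by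
    symm
    apply Finset.sum_filter_of_ne
    intro p hp hne
    by_contra hc
    exact hne (h0 p.1 p.2 (by omega))
  rw [step]
  apply Finset.sum_bij' (i := fun p _ => (⟨p.1 + p.2, p.1⟩ : Σ _ : ℕ, ℕ))
    (j := fun q _ => (q.2, q.1 - q.2))
  · intro p hp
    simp only [Finset.mem_filter, Finset.mem_product, Finset.mem_range] at hp
    simp only [Finset.mem_sigma, Finset.mem_range]
    omega
  · intro q hq
    simp only [Finset.mem_sigma, Finset.mem_range] at hq
    simp only [Finset.mem_filter, Finset.mem_product, Finset.mem_range]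
    omega
  · intro p hp
    simp
  · intro q hq
    simp only [Finset.mem_sigma, Finset.mem_range] at hq
    ext
    · simp; omega
    · simp
  · intro p hp
    simp

def cubeEquiv {M : ℕ} : (Fin M → Bool) ≃ Finset (Fin M) where
  toFun x := univ.filter (fun i => x i = true)
  invFun U := fun i => decide (i ∈ U)
  left_inv x := by funext i; simp
  right_inv U := by ext i; simp

lemma bitSum_decide {M : ℕ} (S : Finset (Fin M)) (U : Finset (Fin M)) :
    bitSum S (fun i => decide (i ∈ U)) = (S ∩ U).card := by
  rw [bitSum]
  congr 1
  ext a
  simp [Finset.mem_inter]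

lemma sum_powerset_card {α : Type*} (s : Finset α) (g : ℕ → ℝ) :
    ∑ V ∈ s.powerset, g V.card = ∑ w ∈ range (s.card + 1), (s.card.choose w : ℝ) * g w := by
  rw [Finset.sum_powerset_apply_card]
  apply Finset.sum_congr rfl
  intro w _
  rw [nsmul_eq_mul]

lemma hat_junta_subset (m M : ℕ) (A : ℕ → ℝ) (hAsupp : ∀ x, m < x → A x = 0)
    (S T : Finset (Fin M)) (hS : S.card = m) (hT : T ⊆ S) (hM : m ≤ M) :
    hatP (juntaPMF M m A S) T
      = (∑ w ∈ range (m + 1), A w * kravchuk m T.card w) / (m.choose T.card : ℝ) := by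
  set t := T.card with htdef
  have htm : t ≤ m := hS ▸ Finset.card_le_card hT
  -- Step 1: transfer to sum over finsets
  have step1 : hatP (juntaPMF M m A S) T
      = ∑ U : Finset (Fin M),
          (2 : ℝ) ^ m / (2 : ℝ) ^ M * A ((S ∩ U).card) / (m.choose ((S ∩ U).card) : ℝ)
            * (-1 : ℝ) ^ ((T ∩ U).card) := by
    rw [hatP, ← Equiv.sum_comp (cubeEquiv (M := M)).symm
      (fun x => juntaPMF M m A S x * chr T x)]
    apply Finset.sum_congr rfl
    intro U _
    show juntaPMF M m A S (fun i => decide (i ∈ U)) * chr T (fun i => decide (i ∈ U)) = _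
    rw [juntaPMF, chr, bitSum_decide, bitSum_decide]
  rw [step1]
  -- Step 2: rewrite summand in terms of (U ∩ S, U \ S) and split
  have hTU : ∀ U : Finset (Fin M), T ∩ U = T ∩ (U ∩ S) := by
    intro U
    ext a
    simp only [Finset.mem_inter]
    constructor
    · intro ⟨h1, h2⟩; exact ⟨h1, h2, hT h1⟩
    · tauto
  have step2 : ∑ U : Finset (Fin M),
      (2 : ℝ) ^ m / (2 : ℝ) ^ M * A ((S ∩ U).card) / (m.choose ((S ∩ U).card) : ℝ)
        * (-1 : ℝ) ^ ((T ∩ U).card)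
      = ∑ U ∈ (univ : Finset (Fin M)).powerset,
          (fun V W => (2 : ℝ) ^ m / (2 : ℝ) ^ M * A (V.card) / (m.choose (V.card) : ℝ)
            * (-1 : ℝ) ^ ((T ∩ V).card)) (U ∩ S) (U \ S) := by
    rw [Finset.powerset_univ]
    apply Finset.sum_congr rfl
    intro U _
    simp only []
    rw [Finset.inter_comm S U, hTU U]
  rw [step2, sum_split univ S (Finset.subset_univ S)
    (fun V W => (2 : ℝ) ^ m / (2 : ℝ) ^ M * A (V.card) / (m.choose (V.card) : ℝ)
      * (-1 : ℝ) ^ ((T ∩ V).card))]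
  -- Step 3: inner sum over W is constant
  have cardW : (univ \ S).card = M - m := by
    rw [Finset.card_sdiff_of_subset (Finset.subset_univ S), Finset.card_univ, Fintype.card_fin, hS]
  have step3 : ∀ V : Finset (Fin M),
      ∑ W ∈ (univ \ S).powerset,
        (2 : ℝ) ^ m / (2 : ℝ) ^ M * A (V.card) / (m.choose (V.card) : ℝ)
          * (-1 : ℝ) ^ ((T ∩ V).card)
      = A (V.card) / (m.choose (V.card) : ℝ) * (-1 : ℝ) ^ ((T ∩ V).card) := by
    intro V
    rw [Finset.sum_const, Finset.card_powerset, cardW, nsmul_eq_mul]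
    have h2M : ((2 ^ (M - m) : ℕ) : ℝ) * ((2 : ℝ) ^ m / (2 : ℝ) ^ M) = 1 := by
      push_cast
      rw [pow_sub₀ (2 : ℝ) two_ne_zero hM]
      field_simp
    linear_combination (A (V.card) / (m.choose (V.card) : ℝ)
      * (-1 : ℝ) ^ ((T ∩ V).card)) * h2M
  simp only [step3]
  -- Step 4: split V at T
  have step4 : ∑ V ∈ S.powerset,
      A (V.card) / (m.choose (V.card) : ℝ) * (-1 : ℝ) ^ ((T ∩ V).card)
      = ∑ V ∈ S.powerset,
        (fun a b => A (a.card + b.card) / (m.choose (a.card + b.card) : ℝ)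
          * (-1 : ℝ) ^ (a.card)) (V ∩ T) (V \ T) := by
    apply Finset.sum_congr rfl
    intro V _
    simp only []
    rw [Finset.card_inter_add_card_sdiff, Finset.inter_comm T V]
  rw [step4, sum_split S T hT
    (fun a b => A (a.card + b.card) / (m.choose (a.card + b.card) : ℝ)
      * (-1 : ℝ) ^ (a.card))]
  -- Step 5: group by cardinalities
  have cardST : (S \ T).card = m - t := by rw [Finset.card_sdiff_of_subset hT, hS]
  have step5 : ∑ V1 ∈ T.powerset, ∑ V2 ∈ (S \ T).powerset,
      A (V1.card + V2.card) / (m.choose (V1.card + V2.card) : ℝ) * (-1 : ℝ) ^ (V1.card)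
      = ∑ j ∈ range (t + 1), (t.choose j : ℝ) *
          ∑ v ∈ range ((m - t) + 1), ((m - t).choose v : ℝ) *
            (A (j + v) / (m.choose (j + v) : ℝ) * (-1 : ℝ) ^ j) := by
    have inner : ∀ V1 : Finset (Fin M), ∑ V2 ∈ (S \ T).powerset,
        A (V1.card + V2.card) / (m.choose (V1.card + V2.card) : ℝ) * (-1 : ℝ) ^ (V1.card)
        = ∑ v ∈ range ((m - t) + 1), ((m - t).choose v : ℝ) *
            (A (V1.card + v) / (m.choose (V1.card + v) : ℝ) * (-1 : ℝ) ^ (V1.card)) := by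
      intro V1
      rw [← cardST]
      exact sum_powerset_card (S \ T)
        (fun v => A (V1.card + v) / (m.choose (V1.card + v) : ℝ) * (-1 : ℝ) ^ (V1.card))
    simp only [inner]
    exact sum_powerset_card T (fun j => ∑ v ∈ range ((m - t) + 1), ((m - t).choose v : ℝ) *
      (A (j + v) / (m.choose (j + v) : ℝ) * (-1 : ℝ) ^ j))
  rw [step5]
  set g : ℕ → ℕ → ℝ := fun j v => (t.choose j : ℝ) * (((m - t).choose v : ℝ) *
    (A (j + v) / (m.choose (j + v) : ℝ) * (-1 : ℝ) ^ j)) with hgdef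
  have hg : ∀ j v, m < j + v → g j v = 0 := by
    intro j v hjv
    rw [hgdef]
    simp only []
    rw [hAsupp _ hjv, zero_div, zero_mul, mul_zero, mul_zero]
  have step6 : ∑ j ∈ range (t + 1), (t.choose j : ℝ) *
      ∑ v ∈ range ((m - t) + 1), ((m - t).choose v : ℝ) *
        (A (j + v) / (m.choose (j + v) : ℝ) * (-1 : ℝ) ^ j)
      = ∑ j ∈ range (m + 1), ∑ v ∈ range (m + 1), g j v := by
    have inner : ∀ j, (t.choose j : ℝ) *
        ∑ v ∈ range ((m - t) + 1), ((m - t).choose v : ℝ) *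
          (A (j + v) / (m.choose (j + v) : ℝ) * (-1 : ℝ) ^ j)
        = ∑ v ∈ range (m + 1), g j v := by
      intro j
      rw [Finset.mul_sum]
      have ext : ∑ v ∈ range ((m - t) + 1), g j v = ∑ v ∈ range (m + 1), g j v := by
        apply Finset.sum_subset (Finset.range_subset_range.2 (by omega))
        intro v _ hv
        have hv' : m - t < v := by simp only [mem_range, Nat.lt_succ_iff] at *; omega
        rw [hgdef]
        simp [Nat.choose_eq_zero_of_lt hv']
      rw [← ext]
    rw [Finset.sum_congr rfl (fun j _ => inner j)]
    apply Finset.sum_subset (Finset.range_subset_range.2 (by omega))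
    intro j _ hj
    have hj' : t < j := by simp only [mem_range, Nat.lt_succ_iff] at *; omega
    apply Finset.sum_eq_zero
    intro v _
    rw [hgdef]
    simp [Nat.choose_eq_zero_of_lt hj']
  rw [step6, triangle m g hg]
  have step8 : ∀ w ∈ range (m + 1), ∑ j ∈ range (w + 1), g j (w - j)
      = A w * kravchuk m t w / (m.choose t : ℝ) := by
    intro w hw
    have hwm : w ≤ m := by simpa [Nat.lt_succ_iff] using hw
    have e1 : ∑ j ∈ range (w + 1), g j (w - j)
        = A w / (m.choose w : ℝ) * kravchuk m w t := by
      rw [kravchuk, Finset.mul_sum]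
      apply Finset.sum_congr rfl
      intro j hj
      have hjw : j ≤ w := by simpa [Nat.lt_succ_iff] using hj
      have hjw' : j + (w - j) = w := by omega
      rw [hgdef]
      simp only []
      rw [hjw']
      ring
    rw [e1]
    have hCw : ((m.choose w : ℕ) : ℝ) ≠ 0 := Nat.cast_ne_zero.2 (Nat.choose_pos hwm).ne'
    have hCt : ((m.choose t : ℕ) : ℝ) ≠ 0 := Nat.cast_ne_zero.2 (Nat.choose_pos htm).ne'
    have hr := kravchuk_recip m t w htm hwm
    rw [div_mul_eq_mul_div, div_eq_div_iff hCw hCt]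
    linear_combination (-(A w)) * hr
  rw [Finset.sum_congr rfl step8, ← Finset.sum_div]

lemma kravchuk_zero (m x : ℕ) : kravchuk m 0 x = 1 := by
  simp [kravchuk]

lemma hat_junta_not_subset (m M : ℕ) (A : ℕ → ℝ) (S T : Finset (Fin M))
    (h : ¬ T ⊆ S) : hatP (juntaPMF M m A S) T = 0 := by
  obtain ⟨i, hiT, hiS⟩ := Finset.not_subset.1 h
  apply sum_flip i
  intro x
  rw [juntaPMF, juntaPMF, bitSum_update_notMem hiS, chr_update_flip hiT]
  ring

/-- Exact formula for the pairwise correlation of two hidden junta distributions: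
`χ_{U_M}(P_S^A, P_{S'}^A) = Σ_{t=1}^m binom(|S∩S'|, t) a_t² / binom(m,t)²`,
where `a_t = E_{X∼A}[K_t(X;m)]`. -/
theorem junta_pairwise_correlation (m M : ℕ) (hm : 0 < m) (hmM : m < M)
    (A : ℕ → ℝ) (hA0 : ∀ x, 0 ≤ A x) (hAsupp : ∀ x, m < x → A x = 0)
    (hA1 : ∑ x ∈ Finset.range (m + 1), A x = 1)
    (S S' : Finset (Fin M)) (hS : S.card = m) (hS' : S'.card = m) :
    chiCorr (juntaPMF M m A S) (juntaPMF M m A S') (uniformPMF M) =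
      ∑ t ∈ Finset.Icc 1 m,
        ((S ∩ S').card.choose t : ℝ) *
          (∑ x ∈ Finset.range (m + 1), A x * kravchuk m t x) ^ 2 /
          ((m.choose t : ℝ)) ^ 2 := by
  have hMm : m ≤ M := hmM.le
  set P := juntaPMF M m A S
  set Q := juntaPMF M m A S'
  set k := (S ∩ S').card with hkdef
  have hk : k ≤ m := hS ▸ Finset.card_le_card Finset.inter_subset_left
  have e0 : ∑ x, P x * Q x / uniformPMF M x
      = ∑ T : Finset (Fin M), hatP P T * hatP Q T := by
    rw [parseval]
    rw [Finset.mul_sum]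
    apply Finset.sum_congr rfl
    intro x _
    have h2 : ((2:ℝ) ^ M) ≠ 0 := by positivity
    rw [uniformPMF]
    field_simp
  have e1 : ∑ T : Finset (Fin M), hatP P T * hatP Q T
      = ∑ T ∈ (S ∩ S').powerset, hatP P T * hatP Q T := by
    symm
    apply Finset.sum_subset (Finset.subset_univ _)
    intro T _ hT
    rw [Finset.mem_powerset] at hT
    by_cases hTS : T ⊆ S
    · have hTS' : ¬ T ⊆ S' := fun hc => hT (Finset.subset_inter hTS hc)
      rw [hat_junta_not_subset m M A S' T hTS', mul_zero]
    · rw [hat_junta_not_subset m M A S T hTS, zero_mul]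
  set h : ℕ → ℝ := fun c =>
    ((∑ w ∈ range (m + 1), A w * kravchuk m c w) / (m.choose c : ℝ)) ^ 2 with hhdef
  have e2 : ∑ T ∈ (S ∩ S').powerset, hatP P T * hatP Q T
      = ∑ T ∈ (S ∩ S').powerset, h T.card := by
    apply Finset.sum_congr rfl
    intro T hT
    rw [Finset.mem_powerset] at hT
    have h1 : T ⊆ S := hT.trans Finset.inter_subset_left
    have h2 : T ⊆ S' := hT.trans Finset.inter_subset_right
    rw [hat_junta_subset m M A hAsupp S T hS h1 hMm,
      hat_junta_subset m M A hAsupp S' T hS' h2 hMm]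
    simp only [hhdef]
    rw [pow_two]
  have e3 : ∑ T ∈ (S ∩ S').powerset, h T.card
      = ∑ c ∈ range (k + 1), (k.choose c : ℝ) * h c := sum_powerset_card _ h
  have e4 : ∑ c ∈ range (k + 1), (k.choose c : ℝ) * h c
      = 1 + ∑ c ∈ Icc 1 k, (k.choose c : ℝ) * h c := by
    rw [Finset.sum_range_succ']
    have h0 : (k.choose 0 : ℝ) * h 0 = 1 := by
      rw [Nat.choose_zero_right, hhdef]
      simp only [kravchuk_zero, mul_one, hA1, Nat.choose_zero_right]
      norm_num
    rw [h0]
    rw [add_comm]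
    congr 1
    rw [show Icc 1 k = Ico 1 (k + 1) by rw [Finset.Ico_add_one_right_eq_Icc]]
    rw [Finset.sum_Ico_eq_sum_range]
    simp only [Nat.add_sub_cancel]
    apply Finset.sum_congr rfl
    intro i _
    rw [add_comm 1 i]
  have e5 : ∑ c ∈ Icc 1 k, (k.choose c : ℝ) * h c
      = ∑ c ∈ Icc 1 m, (k.choose c : ℝ) * h c := by
    apply Finset.sum_subset (Finset.Icc_subset_Icc le_rfl hk)
    intro c hc hc'
    have : k < c := by
      simp only [Finset.mem_Icc] at hc hc'
      omega
    rw [Nat.choose_eq_zero_of_lt this]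
    norm_num
  have e6 : ∑ c ∈ Icc 1 m, (k.choose c : ℝ) * h c
      = ∑ t ∈ Finset.Icc 1 m,
        ((S ∩ S').card.choose t : ℝ) *
          (∑ x ∈ Finset.range (m + 1), A x * kravchuk m t x) ^ 2 /
          ((m.choose t : ℝ)) ^ 2 := by
    apply Finset.sum_congr rfl
    intro c _
    simp only [hhdef]
    rw [div_pow]
    ring
  rw [chiCorr, e0, e1, e2, e3, e4, e5, e6]
  ring
end

section
/- Let m < M be positive integers, let A be a probability distribution on {0,1,...,m}, let S ⊆ {1,...,M} with |S| = m, and let 0 ≤ δ ≤ √m / 2. Then d_TV(P_S^A, U_M^{S, δ/√m}) = d_TV(A, Bin(m, 1/2 + δ/√m)). -/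
open Finset

/-- The product distribution `U_M^{S,η}` on `{0,1}^M`: coordinate `i` has mean `1/2 + η`
if `i ∈ S` and mean `1/2` otherwise. -/
noncomputable def prodPMF (M : ℕ) (S : Finset (Fin M)) (η : ℝ) (x : Fin M → Bool) : ℝ :=
  ∏ i : Fin M, if i ∈ S then (if x i then 1 / 2 + η else 1 / 2 - η) else (1 / 2 : ℝ)

/-- Total variation distance between pmfs on `{0,1}^M`. -/
noncomputable def dTVCube (M : ℕ) (P Q : (Fin M → Bool) → ℝ) : ℝ :=
  (∑ x : Fin M → Bool, |P x - Q x|) / 2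

/-- Total variation distance between pmfs on `{0,…,m}`. -/
noncomputable def dTVNat (m : ℕ) (P Q : ℕ → ℝ) : ℝ :=
  (∑ x ∈ Finset.range (m + 1), |P x - Q x|) / 2


/-- Sum over a powerset grouped by card. -/
private lemma sum_powerset_card' {α : Type*} [DecidableEq α] (S : Finset α) (h : ℕ → ℝ) :
    ∑ U ∈ S.powerset, h U.card
      = ∑ k ∈ Finset.range (S.card + 1), (S.card.choose k : ℝ) * h k := by
  rw [Finset.sum_powerset]
  refine Finset.sum_congr rfl fun k hk => ?_
  rw [Finset.sum_congr rfl (fun U hU => by rw [(Finset.mem_powersetCard.mp hU).2]),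
    Finset.sum_const, Finset.card_powersetCard, nsmul_eq_mul]

private lemma sum_fiber {M : ℕ} (S : Finset (Fin M)) (h : ℕ → ℝ) :
    ∑ x : Fin M → Bool, h (bitSum S x)
      = ∑ k ∈ Finset.range (S.card + 1),
          (S.card.choose k : ℝ) * 2 ^ (M - S.card) * h k := by
  have e1 : ∑ x : Fin M → Bool, h (bitSum S x)
      = ∑ T : Finset (Fin M), h ((S ∩ T).card) := by
    refine (Fintype.sum_equiv
      ⟨fun T => fun i => decide (i ∈ T), fun x => univ.filter fun i => x i, ?_, ?_⟩ _ _ ?_).symm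
    · intro T; ext i; simp
    · intro x; funext i; simp
    · intro T
      have : bitSum S (fun i => decide (i ∈ T)) = (S ∩ T).card := by
        simp [bitSum, Finset.filter_mem_eq_inter]
      simp [this]
  have e2 : ∑ T : Finset (Fin M), h ((S ∩ T).card)
      = ∑ p ∈ S.powerset ×ˢ Sᶜ.powerset, h p.1.card := by
    refine Finset.sum_nbij' (fun T => (T ∩ S, T \ S)) (fun p => p.1 ∪ p.2) ?_ ?_ ?_ ?_ ?_
    · intro T _
      simp only [Finset.mem_product, Finset.mem_powerset]
      constructor
      · exact Finset.inter_subset_right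
      · intro i hi
        simp only [Finset.mem_sdiff] at hi
        simp [hi.2]
    · intro p _; exact Finset.mem_univ _
    · intro T _
      ext i
      simp only [Finset.mem_union, Finset.mem_inter, Finset.mem_sdiff]
      tauto
    · intro p hp
      simp only [Finset.mem_product, Finset.mem_powerset] at hp
      obtain ⟨hU, hV⟩ := hp
      have hVS : ∀ i ∈ p.2, i ∉ S := by
        intro i hi; have := hV hi; simpa using this
      ext i
      · simp only [Finset.mem_inter, Finset.mem_union]
        constructor
        · rintro ⟨h1 | h1, h2⟩
          · exact h1
          · exact absurd h2 (hVS _ h1)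
        · intro hi; exact ⟨Or.inl hi, hU hi⟩
      · simp only [Finset.mem_sdiff, Finset.mem_union]
        constructor
        · rintro ⟨h1 | h1, h2⟩
          · exact absurd (hU h1) h2
          · exact h1
        · intro hi; exact ⟨Or.inr hi, hVS _ hi⟩
    · intro T _
      rw [Finset.inter_comm]
  rw [e1, e2, Finset.sum_product]
  have : ∀ U ∈ S.powerset, ∑ _ ∈ Sᶜ.powerset, h U.card
      = (2 : ℝ) ^ (M - S.card) * h U.card := by
    intro U _
    rw [Finset.sum_const, Finset.card_powerset, Finset.card_compl, nsmul_eq_mul]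
    push_cast
    simp [Fintype.card_fin]
  rw [Finset.sum_congr rfl this]
  rw [← Finset.mul_sum, sum_powerset_card', Finset.mul_sum]
  refine Finset.sum_congr rfl fun k _ => by ring

private lemma prodPMF_eq' {M : ℕ} (S : Finset (Fin M)) (η : ℝ) (x : Fin M → Bool) :
    (∏ i : Fin M, if i ∈ S then (if x i then 1 / 2 + η else 1 / 2 - η) else (1 / 2 : ℝ))
      = (1/2 + η) ^ (bitSum S x) * (1/2 - η) ^ (S.card - bitSum S x)
        * (1/2 : ℝ) ^ (M - S.card) := by
  rw [← Finset.prod_mul_prod_compl S]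
  congr 1
  · have h1 : ∀ i ∈ S, (if i ∈ S then (if x i then 1/2+η else 1/2-η) else (1/2:ℝ))
        = if x i then 1/2+η else 1/2-η := fun i hi => if_pos hi
    rw [Finset.prod_congr rfl h1, Finset.prod_ite, Finset.prod_const, Finset.prod_const]
    have h2 : (S.filter fun i => x i).card = bitSum S x := by
      simp [bitSum]
    have h3 : (S.filter fun i => ¬ x i).card = S.card - bitSum S x := by
      have := Finset.card_filter_add_card_filter_not (s := S)
        (p := fun i => x i = true)
      have h4 : (S.filter fun i => ¬ (x i = true)).card = S.card - bitSum S x := by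
        omega
      rw [← h4]
    rw [h2, h3]
  · have h1 : ∀ i ∈ Sᶜ, (if i ∈ S then (if x i then 1/2+η else 1/2-η) else (1/2:ℝ))
        = (1/2 : ℝ) := by
      intro i hi
      rw [if_neg (by simpa using hi)]
    rw [Finset.prod_congr rfl h1, Finset.prod_const, Finset.card_compl, Fintype.card_fin]

/-- `d_TV(P_S^A, U_M^{S, δ/√m}) = d_TV(A, Bin(m, 1/2 + δ/√m))`. -/
theorem junta_product_tv (m M : ℕ) (hm : 0 < m) (hmM : m < M)
    (A : ℕ → ℝ) (hA0 : ∀ x, 0 ≤ A x) (hAsupp : ∀ x, m < x → A x = 0)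
    (hA1 : ∑ x ∈ Finset.range (m + 1), A x = 1)
    (S : Finset (Fin M)) (hS : S.card = m)
    (δ : ℝ) (hδ0 : 0 ≤ δ) (hδ1 : δ ≤ Real.sqrt m / 2) :
    dTVCube M (juntaPMF M m A S) (prodPMF M S (δ / Real.sqrt m)) =
      dTVNat m A (binPMF m (1 / 2 + δ / Real.sqrt m)) := by
  set η := δ / Real.sqrt m with hη
  set p := 1/2 + η with hp
  have hk : ∀ x : Fin M → Bool, bitSum S x ≤ m := fun x =>
    hS ▸ Finset.card_filter_le _ _
  have h2 : (2:ℝ)^m / 2^M = (1/2:ℝ)^(M-m) := by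
    have h2M : (2:ℝ)^M = 2^(M-m) * 2^m := by
      rw [← pow_add]; congr 1; omega
    rw [h2M, div_pow, one_pow]
    rw [div_eq_div_iff (by positivity) (by positivity)]
    ring
  have key : ∀ x : Fin M → Bool,
      |juntaPMF M m A S x - prodPMF M S η x|
        = (1/2:ℝ)^(M-m) / (m.choose (bitSum S x) : ℝ)
            * |A (bitSum S x) - binPMF m p (bitSum S x)| := by
    intro x
    set k := bitSum S x with hkdef
    have hkm := hk x
    have hC : (0:ℝ) < (m.choose k : ℝ) := by
      exact_mod_cast Nat.choose_pos hkm
    have e : juntaPMF M m A S x - prodPMF M S η x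
        = (1/2:ℝ)^(M-m) / (m.choose k : ℝ) * (A k - binPMF m p k) := by
      rw [juntaPMF, prodPMF, prodPMF_eq' S η x, hS, ← hkdef, h2, binPMF]
      have h1p : (1:ℝ) - p = 1/2 - η := by rw [hp]; ring
      rw [h1p]
      generalize (1/2 + η : ℝ) ^ k = X
      generalize (1/2 - η : ℝ) ^ (m - k) = Y
      generalize ((1:ℝ)/2) ^ (M - m) = c
      field_simp
    rw [e, abs_mul, abs_of_nonneg (by positivity)]
  rw [dTVCube, Finset.sum_congr rfl fun x _ => key x]
  have := sum_fiber S fun k =>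
    (1/2:ℝ)^(M-m) / (m.choose k : ℝ) * |A k - binPMF m p k|
  rw [this, hS, dTVNat]
  congr 1
  refine Finset.sum_congr rfl fun k hk' => ?_
  have hkm : k ≤ m := by
    simp only [Finset.mem_range] at hk'; omega
  have hC : ((m.choose k : ℝ)) ≠ 0 := by
    exact_mod_cast (Nat.choose_pos hkm).ne'
  have h12 : (2:ℝ)^(M-m) * (1/2)^(M-m) = 1 := by
    rw [← mul_pow]; norm_num
  field_simp
  linear_combination |A k - binPMF m p k| * h12
end

section
/- Let m < M be positive integers, let A be a probability distribution on {0,1,...,m}, let S ⊆ {1,...,M} with |S| = m, and let δ ≥ 0. Then d_TV(P_S^A, Q_M^{S, δ/m}) = d_TV(A, IS(m, δ/m)). -/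
open Finset

/-- `(−1)^{x_i}` for a bit `x_i`. -/
def sgn (b : Bool) : ℝ := if b then -1 else 1

/-- The Ising energy `(1/2) Σ_{i,j} θ_{ij} (−1)^{x_i + x_j}` with `θ_{ij} = η` for
distinct `i, j ∈ S` and `θ_{ij} = 0` otherwise. -/
noncomputable def isingEnergy (M : ℕ) (S : Finset (Fin M)) (η : ℝ)
    (x : Fin M → Bool) : ℝ :=
  (1 / 2) * ∑ i : Fin M, ∑ j : Fin M,
    (if i ∈ S ∧ j ∈ S ∧ i ≠ j then η else 0) * sgn (x i) * sgn (x j)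

/-- The Ising model `Q_M^{S,η}` on `{0,1}^M`, with pmf proportional to
`exp((1/2) Σ_{i,j} θ_{ij} (−1)^{x_i + x_j})`. -/
noncomputable def isingCubePMF (M : ℕ) (S : Finset (Fin M)) (η : ℝ)
    (x : Fin M → Bool) : ℝ :=
  Real.exp (isingEnergy M S η x) / ∑ y : Fin M → Bool, Real.exp (isingEnergy M S η y)

/-- `h(n,x) = 2x² − 2nx + n(n−1)/2`. -/
noncomputable def hIsing (n x : ℕ) : ℝ :=
  2 * (x : ℝ) ^ 2 - 2 * (n : ℝ) * (x : ℝ) + (n : ℝ) * ((n : ℝ) - 1) / 2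

/-- Partition function `Z_n(δ') = Σ_{x=0}^n binom(n,x) exp(h(n,x)δ')`. -/
noncomputable def Zpart (n : ℕ) (δ' : ℝ) : ℝ :=
  ∑ x ∈ Finset.range (n + 1), (n.choose x : ℝ) * Real.exp (hIsing n x * δ')

/-- The pmf of the one-dimensional Ising distribution `IS(n, δ')` at `x`. -/
noncomputable def isingPMF (n : ℕ) (δ' : ℝ) (x : ℕ) : ℝ :=
  (n.choose x : ℝ) * Real.exp (hIsing n x * δ') / Zpart n δ'

lemma bitSum_le {M m : ℕ} (S : Finset (Fin M)) (hS : S.card = m) (x : Fin M → Bool) :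
    bitSum S x ≤ m := hS ▸ Finset.card_filter_le _ _

/-- Summing a function of `bitSum S x` over the cube. -/
lemma sum_cube {M m : ℕ} (S : Finset (Fin M)) (hS : S.card = m) (f : ℕ → ℝ) :
    ∑ x : Fin M → Bool, f (bitSum S x)
      = 2 ^ (M - m) * ∑ k ∈ Finset.range (m + 1), (m.choose k : ℝ) * f k := by
  have h1 : ∑ x : Fin M → Bool, f (bitSum S x)
      = ∑ p ∈ S.powerset ×ˢ Sᶜ.powerset, f p.1.card := by
    apply Finset.sum_nbij'
      (i := fun x => (S.filter (fun i => x i = true), Sᶜ.filter (fun i => x i = true)))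
      (j := fun p => fun i => decide (i ∈ p.1 ∨ i ∈ p.2))
    · intro x _
      simp [Finset.mem_product, Finset.filter_subset]
    · intro p _
      simp
    · intro x _
      funext i
      by_cases h : i ∈ S <;> cases hx : x i <;>
        simp [Finset.mem_filter, h, hx]
    · rintro ⟨U, V⟩ hp
      simp only [Finset.mem_product, Finset.mem_powerset] at hp
      obtain ⟨hU, hV⟩ := hp
      have h1 : S.filter (fun i => decide (i ∈ U ∨ i ∈ V) = true) = U := by
        ext i
        simp only [Finset.mem_filter, decide_eq_true_eq]
        constructor
        · rintro ⟨hiS, hi | hi⟩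
          · exact hi
          · exact absurd hiS (Finset.mem_compl.1 (hV hi))
        · intro hi
          exact ⟨hU hi, Or.inl hi⟩
      have h2 : Sᶜ.filter (fun i => decide (i ∈ U ∨ i ∈ V) = true) = V := by
        ext i
        simp only [Finset.mem_filter, decide_eq_true_eq, Finset.mem_compl]
        constructor
        · rintro ⟨hiS, hi | hi⟩
          · exact absurd (hU hi) hiS
          · exact hi
        · intro hi
          exact ⟨Finset.mem_compl.1 (hV hi), Or.inr hi⟩
      simp only [Prod.mk.injEq]
      exact ⟨h1, h2⟩
    · intro x _
      rfl
  rw [h1, Finset.sum_product]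
  have hcompl : Sᶜ.card = M - m := by
    rw [Finset.card_compl, hS, Fintype.card_fin]
  have h2 : ∀ U ∈ S.powerset, ∑ _V ∈ Sᶜ.powerset, f U.card
      = 2 ^ (M - m) * f U.card := by
    intro U _
    rw [Finset.sum_const, Finset.card_powerset, hcompl, nsmul_eq_mul]
    push_cast
    ring
  rw [Finset.sum_congr rfl h2, ← Finset.mul_sum]
  congr 1
  rw [Finset.sum_powerset, hS]
  refine Finset.sum_congr rfl fun j hj => ?_
  have : ∀ t ∈ Finset.powersetCard j S, f t.card = f j := fun t ht => by
    rw [(Finset.mem_powersetCard.1 ht).2]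
  rw [Finset.sum_congr rfl this, Finset.sum_const, Finset.card_powersetCard, hS,
    nsmul_eq_mul]

lemma sgn_eq (b : Bool) : sgn b = 1 - 2 * (if b = true then (1 : ℝ) else 0) := by
  cases b <;> simp [sgn] <;> norm_num

lemma sum_sgn {M m : ℕ} (S : Finset (Fin M)) (hS : S.card = m) (x : Fin M → Bool) :
    ∑ i ∈ S, sgn (x i) = (m : ℝ) - 2 * (bitSum S x : ℝ) := by
  have h : ∑ i ∈ S, sgn (x i)
      = ∑ i ∈ S, (1 - 2 * (if x i = true then (1 : ℝ) else 0)) :=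
    Finset.sum_congr rfl fun i _ => sgn_eq (x i)
  rw [h, Finset.sum_sub_distrib, Finset.sum_const, ← Finset.mul_sum,
    Finset.sum_boole, hS]
  simp [bitSum]

lemma energy_eq {M m : ℕ} (S : Finset (Fin M)) (hS : S.card = m) (η : ℝ)
    (x : Fin M → Bool) :
    isingEnergy M S η x = η * hIsing m (bitSum S x) := by
  have term_eq : ∀ i j : Fin M,
      (if i ∈ S ∧ j ∈ S ∧ i ≠ j then η else 0) * sgn (x i) * sgn (x j)
      = (if i ∈ S then sgn (x i) else 0) * (if j ∈ S then sgn (x j) else 0) * η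
        - (if i = j ∧ i ∈ S then η else 0) := by
    intro i j
    by_cases h3 : i = j
    · subst h3
      by_cases h1 : i ∈ S <;> cases hx : x i <;> simp [h1, sgn, hx]
    · by_cases h1 : i ∈ S <;> by_cases h2 : j ∈ S <;>
        simp [h1, h2, h3] <;> ring
  have hsum1 : ∀ i : Fin M, ∑ j : Fin M, (if j ∈ S then sgn (x j) else 0)
      = ∑ j ∈ S, sgn (x j) := by
    intro i
    simp [Finset.sum_ite_mem]
  have hsum2 : ∀ i : Fin M, (∑ j : Fin M, if i = j ∧ i ∈ S then η else 0)
      = (if i ∈ S then η else 0) := by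
    intro i
    simp only [ite_and]
    rw [Finset.sum_ite_eq]
    simp
  have key : ∑ i : Fin M, ∑ j : Fin M,
      (if i ∈ S ∧ j ∈ S ∧ i ≠ j then η else 0) * sgn (x i) * sgn (x j)
      = (∑ i ∈ S, sgn (x i)) ^ 2 * η - (m : ℝ) * η := by
    simp only [term_eq, Finset.sum_sub_distrib]
    congr 1
    · have : ∀ i : Fin M, ∑ j : Fin M,
          ((if i ∈ S then sgn (x i) else 0) * (if j ∈ S then sgn (x j) else 0) * η)
          = (if i ∈ S then sgn (x i) else 0) * (∑ j ∈ S, sgn (x j)) * η := by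
        intro i
        rw [← hsum1 i, ← Finset.sum_mul, ← Finset.mul_sum]
      rw [Finset.sum_congr rfl fun i _ => this i]
      simp only [← Finset.sum_mul]
      rw [Finset.sum_ite_mem]
      simp [sq]
    · rw [Finset.sum_congr rfl fun i _ => hsum2 i, Finset.sum_ite_mem]
      simp [hS, mul_comm]
  unfold isingEnergy
  rw [key, sum_sgn S hS x, hIsing]
  ring

/-- `d_TV(P_S^A, Q_M^{S, δ/m}) = d_TV(A, IS(m, δ/m))`. -/
theorem junta_ising_tv (m M : ℕ) (hm : 0 < m) (hmM : m < M)
    (A : ℕ → ℝ) (hA0 : ∀ x, 0 ≤ A x) (hAsupp : ∀ x, m < x → A x = 0)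
    (hA1 : ∑ x ∈ Finset.range (m + 1), A x = 1)
    (S : Finset (Fin M)) (hS : S.card = m)
    (δ : ℝ) (hδ : 0 ≤ δ) :
    dTVCube M (juntaPMF M m A S) (isingCubePMF M S (δ / m)) =
      dTVNat m A (isingPMF m (δ / m)) := by
  set η := δ / m with hη
  have hmle : m ≤ M := hmM.le
  have hZc : (∑ y : Fin M → Bool, Real.exp (isingEnergy M S η y))
      = 2 ^ (M - m) * Zpart m η := by
    have h := sum_cube S hS (fun k => Real.exp (η * hIsing m k))
    simp only [← energy_eq S hS η] at h
    rw [h]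
    congr 1
    exact Finset.sum_congr rfl fun k _ => by rw [mul_comm (hIsing m k) η]
  have hZp : 0 < Zpart m η := by
    apply Finset.sum_pos
    · intro k hk
      have hc : 0 < m.choose k := Nat.choose_pos (Nat.lt_succ_iff.1 (Finset.mem_range.1 hk))
      have : (0:ℝ) < (m.choose k : ℝ) := by exact_mod_cast hc
      positivity
    · exact ⟨0, Finset.mem_range.2 (Nat.succ_pos m)⟩
  have hpow : (0:ℝ) < 2 ^ (M - m) := by positivity
  have h2M : (2:ℝ) ^ M = 2 ^ (M - m) * 2 ^ m := by
    rw [← pow_add]; congr 1; omega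
  have hpt : ∀ x : Fin M → Bool,
      |juntaPMF M m A S x - isingCubePMF M S η x|
        = |A (bitSum S x) - isingPMF m η (bitSum S x)|
            / (2 ^ (M - m) * (m.choose (bitSum S x) : ℝ)) := by
    intro x
    have hk : bitSum S x ≤ m := bitSum_le S hS x
    have hc : (0:ℝ) < (m.choose (bitSum S x) : ℝ) := by
      exact_mod_cast Nat.choose_pos hk
    have heq : juntaPMF M m A S x - isingCubePMF M S η x
        = (A (bitSum S x) - isingPMF m η (bitSum S x))
            / (2 ^ (M - m) * (m.choose (bitSum S x) : ℝ)) := by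
      unfold juntaPMF isingCubePMF isingPMF
      rw [hZc, energy_eq S hS η, h2M, mul_comm (hIsing m (bitSum S x)) η]
      field_simp
    rw [heq, abs_div]
    congr 1
    exact abs_of_pos (by positivity)
  calc dTVCube M (juntaPMF M m A S) (isingCubePMF M S η)
      = (∑ x : Fin M → Bool, |A (bitSum S x) - isingPMF m η (bitSum S x)|
          / (2 ^ (M - m) * (m.choose (bitSum S x) : ℝ))) / 2 := by
        unfold dTVCube
        rw [Finset.sum_congr rfl fun x _ => hpt x]
    _ = (2 ^ (M - m) * ∑ k ∈ Finset.range (m + 1), (m.choose k : ℝ) *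
          (|A k - isingPMF m η k| / (2 ^ (M - m) * (m.choose k : ℝ)))) / 2 := by
        rw [sum_cube S hS (fun k => |A k - isingPMF m η k|
          / (2 ^ (M - m) * (m.choose k : ℝ)))]
    _ = dTVNat m A (isingPMF m η) := by
        unfold dTVNat
        congr 1
        rw [Finset.mul_sum]
        refine Finset.sum_congr rfl fun k hk => ?_
        have hc : (0:ℝ) < (m.choose k : ℝ) := by
          exact_mod_cast Nat.choose_pos (Nat.lt_succ_iff.1 (Finset.mem_range.1 hk))
        field_simp
end

section
/- Let m be a positive integer, x ∈ {0,1,...,m}, and 0 < δ ≤ √m / 2. Then F_{m,x}(δ/√m) / F_{m,x}(0) ≤ exp(4δx/√m − 2δ√m). -/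
/-- Ratio bound for binomial pmfs:
`F_{m,x}(δ/√m) / F_{m,x}(0) ≤ exp(4δx/√m − 2δ√m)`. -/
theorem binomial_ratio_bound (m : ℕ) (hm : 0 < m) (x : ℕ) (hx : x ≤ m)
    (δ : ℝ) (hδ0 : 0 < δ) (hδ1 : δ ≤ Real.sqrt m / 2) :
    binPMF m (1 / 2 + δ / Real.sqrt m) x / binPMF m (1 / 2) x ≤
      Real.exp (4 * δ * x / Real.sqrt m - 2 * δ * Real.sqrt m) := by
  have hs : (0:ℝ) < Real.sqrt m := Real.sqrt_pos.2 (by exact_mod_cast hm)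
  set s := Real.sqrt m with hsdef
  set η := δ / s with hηdef
  have hη0 : 0 < η := div_pos hδ0 hs
  have hη2 : η ≤ 1/2 := by
    rw [hηdef, div_le_iff₀ hs]
    linarith
  have hC : (0:ℝ) < m.choose x := by exact_mod_cast Nat.choose_pos hx
  have hpos : (0:ℝ) < binPMF m (1/2) x := by
    unfold binPMF
    positivity
  rw [div_le_iff₀ hpos]
  have h1 : (1/2 + η : ℝ) ≤ (1/2) * Real.exp (2*η) := by
    have := Real.add_one_le_exp (2*η)
    linarith
  have h2 : (1 - (1/2 + η) : ℝ) ≤ (1/2) * Real.exp (-(2*η)) := by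
    have := Real.add_one_le_exp (-(2*η))
    linarith
  have hb1 : (0:ℝ) ≤ 1/2 + η := by linarith
  have hb2 : (0:ℝ) ≤ 1 - (1/2 + η) := by linarith
  have key : binPMF m (1/2 + η) x ≤
      Real.exp (2*η*x - 2*η*(m - x : ℕ)) * binPMF m (1/2) x := by
    unfold binPMF
    have e1 : (1/2 + η : ℝ)^x ≤ ((1/2) * Real.exp (2*η))^x :=
      pow_le_pow_left₀ hb1 h1 x
    have e2 : (1 - (1/2 + η) : ℝ)^(m-x) ≤ ((1/2) * Real.exp (-(2*η)))^(m-x) :=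
      pow_le_pow_left₀ hb2 h2 (m-x)
    calc (m.choose x : ℝ) * (1/2 + η)^x * (1 - (1/2 + η))^(m-x)
        ≤ (m.choose x : ℝ) * ((1/2) * Real.exp (2*η))^x *
            ((1/2) * Real.exp (-(2*η)))^(m-x) := by
          apply mul_le_mul
          · exact mul_le_mul_of_nonneg_left e1 (le_of_lt hC)
          · exact e2
          · exact pow_nonneg hb2 _
          · positivity
      _ = Real.exp (2*η*x - 2*η*(m - x : ℕ)) *
            ((m.choose x : ℝ) * (1/2)^x * (1 - 1/2)^(m-x)) := by
          rw [mul_pow, mul_pow, ← Real.exp_nat_mul, ← Real.exp_nat_mul,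
            show 2*η*(x:ℝ) - 2*η*((m-x:ℕ):ℝ)
              = (x:ℝ)*(2*η) + ((m-x:ℕ):ℝ)*(-(2*η)) by ring, Real.exp_add]
          norm_num
          ring

  have hexp : 2*η*x - 2*η*((m - x : ℕ) : ℝ) = 4 * δ * x / s - 2 * δ * s := by
    have hcast : ((m - x : ℕ) : ℝ) = (m : ℝ) - x := by
      exact Nat.cast_sub hx
    have hss : s * s = (m : ℝ) := Real.mul_self_sqrt (by positivity)
    rw [hcast, hηdef]
    field_simp
    nlinarith [hss]
  rw [← hexp]
  exact key
end
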